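/- arXiv:1306.4849 — 7 statements merged into one kernel-verified Lean document; each statement's English description precedes it below -/
import Mathlib

section
/- Let C be a nonzero cyclic code of length n over F_q with defining set S_C and distance d, and suppose gcd(n,q)=1. Suppose there are natural numbers ℓ, m, r, s with 1 ≤ m ≤ ℓ, r ≥ 1, s ≥ 1, and an index i_0 ∈ {0,…,n−1} such that: (a) (i_0+j)_n ∈ S_C for all j = 0,…,ℓ−1, and (b) (i_0+ℓ+r+h(m+r)+t)_n ∈ S_C for all t = 0,…,m−1 and all h = 0,…,s−1. Then: if gcd(m+r,n) ≤ m, one has d ≥ ℓ + 1 + s − r·⌊ℓ/(m+r)⌋ − max{(ℓ)_{m+r} − m, 0}; otherwise d ≥ ℓ + 1. -/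
open Polynomial Matrix

lemma chain_card_le {F : Type} [Field F] {ι : Type} [Fintype ι]
    (x : ι → F) (cf : ι → F) (lst : List (ℕ × ℕ))
    (hne : ∀ pq ∈ lst, (∑ p, cf p * x p ^ (pq.1 + pq.2)) ≠ 0)
    (hpw : lst.Pairwise (fun pq pq' => (∑ p, cf p * x p ^ (pq.1 + pq'.2)) = 0)) :
    lst.length ≤ Fintype.card ι := by
  classical
  set N := lst.length with hN
  have hget := List.pairwise_iff_get.mp hpw
  set u : Fin N → ι → F := fun j p => x p ^ (lst.get j).1 with hu
  have hli : LinearIndependent F u := by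
    rw [Fintype.linearIndependent_iff]
    intro gc hg j
    by_contra hj0
    set S : Finset (Fin N) := Finset.univ.filter (fun i => gc i ≠ 0) with hS
    have hSne : S.Nonempty := ⟨j, by simp [hS, hj0]⟩
    set j₀ := S.max' hSne with hj₀
    have hj₀S : j₀ ∈ S := S.max'_mem hSne
    have hgj₀ : gc j₀ ≠ 0 := by
      have := hj₀S
      simp only [hS, Finset.mem_filter] at this
      exact this.2
    have hp : ∀ p : ι, (∑ i : Fin N, gc i * x p ^ (lst.get i).1) = 0 := by
      intro p
      have := congrFun hg p
      simpa [u, Finset.sum_apply] using this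
    have key : (∑ i : Fin N, gc i * (∑ p, cf p * x p ^ ((lst.get i).1 + (lst.get j₀).2))) = 0 := by
      have h1 : (∑ i : Fin N, gc i * (∑ p, cf p * x p ^ ((lst.get i).1 + (lst.get j₀).2)))
          = ∑ p, (cf p * x p ^ (lst.get j₀).2) * (∑ i : Fin N, gc i * x p ^ (lst.get i).1) := by
        simp_rw [Finset.mul_sum, pow_add]
        rw [Finset.sum_comm]
        refine Finset.sum_congr rfl fun p _ => ?_
        refine Finset.sum_congr rfl fun i _ => ?_
        ring
      rw [h1]
      simp only [hp, mul_zero, Finset.sum_const_zero]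
    have hsingle : (∑ i : Fin N, gc i * (∑ p, cf p * x p ^ ((lst.get i).1 + (lst.get j₀).2)))
        = gc j₀ * (∑ p, cf p * x p ^ ((lst.get j₀).1 + (lst.get j₀).2)) := by
      refine Finset.sum_eq_single_of_mem j₀ (Finset.mem_univ _) fun i _ hij => ?_
      rcases lt_or_gt_of_ne hij with hlt | hgt
      · rw [hget i j₀ hlt, mul_zero]
      · have hiS : i ∉ S := fun hiS => absurd (S.le_max' i hiS) (not_le.mpr hgt)
        have : gc i = 0 := by
          by_contra hcc
          exact hiS (by simp [hS, hcc])
        rw [this, zero_mul]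
    rw [hsingle] at key
    have hne' := hne (lst.get j₀) (lst.get_mem _)
    rcases mul_eq_zero.mp key with h | h
    · exact hgj₀ h
    · exact hne' h
  have := hli.fintype_card_le_finrank
  simpa [Module.finrank_fintype_fun_eq_card] using this

lemma pairwise_range_strong (L : ℕ) :
    (List.range L).Pairwise (fun a b => a < b ∧ b < L) := by
  refine (List.pairwise_lt_range (n := L)).imp_of_mem ?_
  intro a b ha hb hr
  exact ⟨hr, List.mem_range.mp hb⟩

/-- Bound I (Proposition `bound I` of Piva–Sala).  `C` is a nonzero cyclic code of length `n`
over the finite field `Fq` with `q` elements, given by a monic generator polynomial `g`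
dividing `X^n - 1`; `SC` is its complete defining set with respect to a primitive `n`-th
root of unity `α` in the splitting field `F`; `wt` is the Hamming weight and `d` the
minimum distance.  If the defining set contains the pattern of roots described by the
parameters `ℓ, m, r, s, i₀`, then the stated lower bounds on `d` hold. -/
theorem bound_I
    (q n : ℕ) (hq : IsPrimePow q) (hn : 1 ≤ n) (hgcd : Nat.gcd n q = 1)
    (Fq F : Type) [Field Fq] [Fintype Fq] [DecidableEq Fq]
    (hcard : Fintype.card Fq = q)
    [Field F] [Algebra Fq F]
    (hsplit : IsSplittingField Fq F (X ^ n - 1 : Polynomial Fq))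
    (α : F) (hα : IsPrimitiveRoot α n)
    (g : Polynomial Fq) (hmonic : g.Monic) (hdvd : g ∣ X ^ n - 1)
    (C : Set (Fin n → Fq))
    (hC : C = { c | g ∣ ∑ i : Fin n, Polynomial.C (c i) * X ^ (i : ℕ) })
    (SC : Set ℕ)
    (hSC : SC = { i | i < n ∧ Polynomial.aeval (α ^ i) g = 0 })
    (wt : (Fin n → Fq) → ℕ)
    (hwt : ∀ c, wt c = (Finset.univ.filter fun i => c i ≠ 0).card)
    (d : ℕ) (hd : IsLeast { w | ∃ c ∈ C, c ≠ 0 ∧ wt c = w } d)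
    (ℓ m r s i₀ : ℕ)
    (hm1 : 1 ≤ m) (hmℓ : m ≤ ℓ) (hr1 : 1 ≤ r) (hs1 : 1 ≤ s) (hi₀ : i₀ < n)
    (ha : ∀ j < ℓ, (i₀ + j) % n ∈ SC)
    (hb : ∀ t < m, ∀ h < s, (i₀ + ℓ + r + h * (m + r) + t) % n ∈ SC) :
    (Nat.gcd (m + r) n ≤ m →
      d ≥ ℓ + 1 + s - r * (ℓ / (m + r)) - max (ℓ % (m + r) - m) 0) ∧
    (¬ Nat.gcd (m + r) n ≤ m → d ≥ ℓ + 1) := by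
  classical
  obtain ⟨c, hcC, hc0, hwtc⟩ := hd.1
  set cF : Fin n → F := fun i => algebraMap Fq F (c i) with hcF
  set f : ℕ → F := fun v => ∑ i : Fin n, cF i * (α ^ (i : ℕ)) ^ v with hf
  have hdvdc : g ∣ ∑ i : Fin n, Polynomial.C (c i) * X ^ (i : ℕ) := by
    rw [hC] at hcC; exact hcC
  -- f v is evaluation of the codeword polynomial at α^v
  have hfaeval : ∀ v : ℕ,
      f v = Polynomial.aeval (α ^ v) (∑ i : Fin n, Polynomial.C (c i) * X ^ (i : ℕ)) := by
    intro v
    rw [map_sum]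
    refine Finset.sum_congr rfl fun i _ => ?_
    rw [_root_.map_mul, aeval_C, aeval_X_pow, pow_right_comm]
  have hroot : ∀ v : ℕ, Polynomial.aeval (α ^ v) g = 0 → f v = 0 := by
    intro v hv
    obtain ⟨b, hb'⟩ := hdvdc
    rw [hfaeval, hb', _root_.map_mul, hv, zero_mul]
  -- periodicity
  have hmod : ∀ v : ℕ, f v = f (v % n) := by
    intro v
    refine Finset.sum_congr rfl fun i _ => ?_
    congr 1
    conv_lhs => rw [← Nat.div_add_mod v n]
    have h1 : (α ^ (i : ℕ)) ^ n = 1 := by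
      rw [pow_right_comm, hα.pow_eq_one, one_pow]
    rw [pow_add, pow_mul, h1, one_pow, one_mul]
  have hperiod : ∀ v M : ℕ, f (v + M * n) = f v := by
    intro v M
    rw [hmod, hmod v, Nat.add_mul_mod_self_right]
  have hSCf : ∀ v : ℕ, v % n ∈ SC → f v = 0 := by
    intro v hv
    rw [hSC] at hv
    rw [hmod]
    exact hroot _ hv.2
  -- existence of a nonzero value of f (discrete Fourier transform is injective)
  have hz : ∃ v : ℕ, f v ≠ 0 := by
    by_contra hcon
    push_neg at hcon
    apply hc0
    set M : Matrix (Fin n) (Fin n) F := Matrix.vandermonde (fun i : Fin n => α ^ (i : ℕ)) with hM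
    have hv0 : Matrix.vecMul cF M = 0 := by
      funext j
      have := hcon (j : ℕ)
      simp only [hf] at this
      simpa [hM, Matrix.vecMul, Matrix.vandermonde, dotProduct, pow_right_comm] using this
    have hdet : M.det ≠ 0 := by
      rw [hM, Matrix.det_vandermonde]
      refine Finset.prod_ne_zero_iff.mpr fun i _ => Finset.prod_ne_zero_iff.mpr fun j hj => ?_
      have hij : i < j := Finset.mem_Ioi.mp hj
      refine sub_ne_zero_of_ne fun hEq => ?_
      have := hα.pow_inj j.isLt i.isLt hEq
      omega
    have hcF0 : cF = 0 := by
      have h1 : Mᵀ.mulVec cF = 0 := by rw [Matrix.mulVec_transpose]; exact hv0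
      have hdet' : IsUnit Mᵀ.det := by rw [Matrix.det_transpose]; exact hdet.isUnit
      calc cF = (Mᵀ⁻¹ * Mᵀ).mulVec cF := by
                rw [Matrix.nonsing_inv_mul _ hdet', Matrix.one_mulVec]
      _ = Mᵀ⁻¹.mulVec (Mᵀ.mulVec cF) := by rw [← Matrix.mulVec_mulVec]
      _ = 0 := by rw [h1, Matrix.mulVec_zero]
    funext i
    have := congrFun hcF0 i
    simp only [hcF, Pi.zero_apply] at this ⊢
    exact (_root_.map_eq_zero (algebraMap Fq F)).mp this
  -- the support bound for triangular chains
  have hcardP : Fintype.card {i : Fin n // c i ≠ 0} = d := by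
    rw [Fintype.card_subtype, ← hwtc, hwt]
  have hchain : ∀ lst : List (ℕ × ℕ), (∀ pq ∈ lst, f (pq.1 + pq.2) ≠ 0) →
      lst.Pairwise (fun pq pq' => f (pq.1 + pq'.2) = 0) → lst.length ≤ d := by
    intro lst h1 h2
    have hfP : ∀ v : ℕ,
        (∑ p : {i : Fin n // c i ≠ 0}, cF p.1 * (α ^ ((p.1 : Fin n) : ℕ)) ^ v) = f v := by
      intro v
      rw [← Finset.sum_subtype (Finset.univ.filter fun i : Fin n => c i ≠ 0)
        (by simp) (fun i => cF i * (α ^ (i : ℕ)) ^ v)]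
      show _ = ∑ i : Fin n, cF i * (α ^ (i : ℕ)) ^ v
      exact Finset.sum_subset (Finset.subset_univ _) (fun i _ hi => by
        have hci : c i = 0 := by simpa using hi
        simp [hcF, hci])
    calc lst.length ≤ Fintype.card {i : Fin n // c i ≠ 0} := by
          refine chain_card_le (fun p => α ^ ((p.1 : Fin n) : ℕ)) (fun p => cF p.1) lst ?_ ?_
          · intro pq hpq; rw [hfP]; exact h1 pq hpq
          · exact h2.imp (fun hab => by rw [hfP]; exact hab)
    _ = d := hcardP
  -- run extension: first failure after the run
  have hεex : ∃ ε : ℕ, f (i₀ + ℓ + ε) ≠ 0 := by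
    obtain ⟨v, hv⟩ := hz
    refine ⟨v + n - (i₀ + ℓ) % n, ?_⟩
    have hq1 : n * ((i₀ + ℓ) / n) + (i₀ + ℓ) % n = i₀ + ℓ := Nat.div_add_mod _ _
    have hq2 : (i₀ + ℓ) % n < n := Nat.mod_lt _ (by omega)
    have harg : i₀ + ℓ + (v + n - (i₀ + ℓ) % n) = v + ((i₀ + ℓ) / n + 1) * n := by
      have : ((i₀ + ℓ) / n + 1) * n = n * ((i₀ + ℓ) / n) + n := by ring
      omega
    rw [harg, hperiod]
    exact hv
  set ε := Nat.find hεex with hεdef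
  have hνR : f (i₀ + ℓ + ε) ≠ 0 := Nat.find_spec hεex
  have hrun : ∀ u, u < ℓ + ε → f (i₀ + u) = 0 := by
    intro u hu
    rcases lt_or_ge u ℓ with h | h
    · exact hSCf _ (ha u h)
    · have h2 : u - ℓ < ε := by omega
      have h3 := Nat.find_min hεex h2
      rw [not_not] at h3
      rwa [show i₀ + ℓ + (u - ℓ) = i₀ + u by omega] at h3
  constructor
  · -- Part 1 : with the gcd condition
    intro hgm
    -- existence of a failing block row beyond the pattern (uses gcd ≤ m)
    have hHex : ∃ H : ℕ, ∃ t, t < m ∧ f (i₀ + ℓ + r + (s + H) * (m + r) + t) ≠ 0 := by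
      by_contra hcon
      push_neg at hcon
      obtain ⟨v, hv⟩ := hz
      apply hv
      have hg₀pos : 0 < Nat.gcd (m + r) n := Nat.gcd_pos_of_pos_right _ (by omega)
      have hbez : (Nat.gcd (m + r) n : ℤ) = (m + r) * Nat.gcdA (m + r) n + n * Nat.gcdB (m + r) n :=
        Nat.gcd_eq_gcd_ab (m + r) n
      set g₀ : ℕ := Nat.gcd (m + r) n with hg₀
      set A : ℤ := Nat.gcdA (m + r) n with hA
      set B : ℤ := Nat.gcdB (m + r) n with hB
      set base : ℕ := i₀ + ℓ + r + s * (m + r) with hbase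
      set t : ℕ := (((v : ℤ) - base) % (g₀ : ℤ)).toNat with ht
      have htz : (t : ℤ) = ((v : ℤ) - base) % (g₀ : ℤ) :=
        Int.toNat_of_nonneg (Int.emod_nonneg _ (by exact_mod_cast (by omega : g₀ ≠ 0)))
      have htlt : t < m := by
        have h1 : ((v : ℤ) - base) % (g₀ : ℤ) < (g₀ : ℤ) :=
          Int.emod_lt_of_pos _ (by exact_mod_cast hg₀pos)
        have h2 : g₀ ≤ m := hgm
        omega
      have hdvd0 : (g₀ : ℤ) ∣ ((v : ℤ) - base - t) := by
        rw [htz]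
        exact Int.dvd_self_sub_of_emod_eq rfl
      obtain ⟨D, hD⟩ := hdvd0
      set K : ℕ := (A * D).natAbs with hK
      have hwnn : (0 : ℤ) ≤ A * D + (K : ℤ) * n := by
        have h1 : (K : ℤ) * 1 ≤ (K : ℤ) * n := by
          have : (1 : ℤ) ≤ n := by exact_mod_cast hn
          exact mul_le_mul_of_nonneg_left this (by positivity)
        have h2 : -(K : ℤ) ≤ A * D := by
          have h3 := neg_abs_le (A * D)
          rw [Int.abs_eq_natAbs] at h3
          rw [hK]
          exact h3
        omega
      set w : ℕ := (A * D + (K : ℤ) * n).toNat with hw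
      have hwz : (w : ℤ) = A * D + (K : ℤ) * n := Int.toNat_of_nonneg hwnn
      have hZ : ((base : ℤ) + (w : ℤ) * (m + r) + t) = (v : ℤ) + (n : ℤ) * ((K : ℤ) * (m + r) - B * D) := by
        rw [hwz]
        linear_combination (-1 : ℤ) * hD - D * hbez
      have hfeq : f (base + w * (m + r) + t) = f v := by
        have h1 : ∀ M₁ M₂ : ℕ, base + w * (m + r) + t + M₁ * n = v + M₂ * n →
            f (base + w * (m + r) + t) = f v := by
          intro M₁ M₂ hM
          calc f (base + w * (m + r) + t) = f (base + w * (m + r) + t + M₁ * n) :=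
                (hperiod _ _).symm
          _ = f (v + M₂ * n) := by rw [hM]
          _ = f v := hperiod _ _
        rcases le_or_gt 0 ((K : ℤ) * (m + r) - B * D) with hKs | hKs
        · refine h1 0 ((K : ℤ) * (m + r) - B * D).toNat ?_
          have h2 : (((K : ℤ) * (m + r) - B * D).toNat : ℤ) = (K : ℤ) * (m + r) - B * D :=
            Int.toNat_of_nonneg hKs
          have h3 : ((base + w * (m + r) + t + 0 * n : ℕ) : ℤ)
              = ((v + ((K : ℤ) * (m + r) - B * D).toNat * n : ℕ) : ℤ) := by
            push_cast
            rw [h2]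
            linarith [hZ]
          exact_mod_cast h3
        · refine h1 (-((K : ℤ) * (m + r) - B * D)).toNat 0 ?_
          have h2 : ((-((K : ℤ) * (m + r) - B * D)).toNat : ℤ) = -((K : ℤ) * (m + r) - B * D) :=
            Int.toNat_of_nonneg (by omega)
          have h3 : ((base + w * (m + r) + t + (-((K : ℤ) * (m + r) - B * D)).toNat * n : ℕ) : ℤ)
              = ((v + 0 * n : ℕ) : ℤ) := by
            push_cast
            rw [h2]
            linarith [hZ]
          exact_mod_cast h3
      rw [← hfeq]
      have hform : base + w * (m + r) + t = i₀ + ℓ + r + (s + w) * (m + r) + t := by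
        have : (s + w) * (m + r) = s * (m + r) + w * (m + r) := by ring
        omega
      rw [hform]
      exact hcon w t htlt
    obtain ⟨tstar, htsm, hνB⟩ := Nat.find_spec hHex
    set Hf := Nat.find hHex with hHfdef
    set Hs := s + Hf with hHsdef
    have hFblk : ∀ h, h < Hs → ∀ t, t < m → f (i₀ + ℓ + r + h * (m + r) + t) = 0 := by
      intro h hh t htm
      rcases lt_or_ge h s with hhs | hhs
      · exact hSCf _ (hb t htm h hhs)
      · have hj : h - s < Hf := by omega
        have h3 := Nat.find_min hHex hj
        push_neg at h3
        have h4 := h3 t htm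
        rwa [show s + (h - s) = h by omega] at h4
    -- grid parameters
    set k := ℓ / (m + r) with hkdef
    set e := ℓ % (m + r) with hedef
    have hde : (m + r) * k + e = ℓ := Nat.div_add_mod ℓ (m + r)
    have hem : e < m + r := Nat.mod_lt ℓ (by omega)
    set L := k * m + min e m with hLdef
    set x0 : ℕ → ℕ := fun j => j / m * (m + r) + j % m + 1 with hx0def
    have hx0pos : ∀ j, 1 ≤ x0 j := fun j => by simp only [hx0def]; omega
    have hx0mono : ∀ j1 j2 : ℕ, j1 < j2 → x0 j1 < x0 j2 := by
      intro j1 j2 h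
      have h1 : m * (j1 / m) + j1 % m = j1 := Nat.div_add_mod j1 m
      have h2 : m * (j2 / m) + j2 % m = j2 := Nat.div_add_mod j2 m
      have hm1' : j1 % m < m := Nat.mod_lt _ (by omega)
      have hm2' : j2 % m < m := Nat.mod_lt _ (by omega)
      have hdle : j1 / m ≤ j2 / m := Nat.div_le_div_right (le_of_lt h)
      simp only [hx0def]
      rcases eq_or_lt_of_le hdle with heq | hlt
      · rw [heq] at h1 ⊢; omega
      · have hmul : (j1 / m + 1) * (m + r) ≤ j2 / m * (m + r) :=
          Nat.mul_le_mul_right _ (by omega)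
        have hexp : (j1 / m + 1) * (m + r) = j1 / m * (m + r) + (m + r) := by ring
        omega
    have hx0le : ∀ j, j < L → x0 j ≤ ℓ := by
      intro j hj
      have h1 : m * (j / m) + j % m = j := Nat.div_add_mod j m
      have hjm : j % m < m := Nat.mod_lt _ (by omega)
      have hqk : j / m ≤ k := by
        by_contra hq
        push_neg at hq
        have h5 : m * (k + 1) ≤ m * (j / m) := Nat.mul_le_mul_left _ (by omega)
        have h6 : m * (k + 1) = k * m + m := by ring
        omega
      simp only [hx0def]
      have h10 : k * m = m * k := by ring
      rcases eq_or_lt_of_le hqk with heq | hlt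
      · rw [heq] at h1 ⊢
        have h9 : k * (m + r) = (m + r) * k := by ring
        omega
      · have hmul : (j / m + 1) * (m + r) ≤ k * (m + r) := Nat.mul_le_mul_right _ (by omega)
        have hexp : (j / m + 1) * (m + r) = j / m * (m + r) + (m + r) := by ring
        have h9 : k * (m + r) = (m + r) * k := by ring
        omega
    -- the chain
    set Aent : ℕ → (ℕ × ℕ) := fun j => (i₀ + (ℓ - x0 j), ε + x0 j) with hAent
    set Bent : ℕ → (ℕ × ℕ) := fun h => (i₀ + ℓ + r + h * (m + r) + tstar, (Hs - h) * (m + r))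
      with hBent
    set piv : ℕ × ℕ := (i₀ + ℓ + r + Hs * (m + r) + tstar, 0) with hpiv
    set lst1 : List (ℕ × ℕ) :=
      (((List.range L).map Aent).reverse) ++ (((List.range Hs).map Bent) ++ [piv]) with hlst1
    have hνB' : f (i₀ + ℓ + r + Hs * (m + r) + tstar) ≠ 0 := hνB
    have hmem1 : ∀ pq ∈ lst1, f (pq.1 + pq.2) ≠ 0 := by
      intro pq hpq
      simp only [hlst1, List.mem_append, List.mem_reverse, List.mem_map, List.mem_range,
        List.mem_singleton] at hpq
      rcases hpq with ⟨j, hj, rfl⟩ | (⟨h, hh, rfl⟩ | rfl)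
      · have hxle := hx0le j hj
        show f (i₀ + (ℓ - x0 j) + (ε + x0 j)) ≠ 0
        rw [show i₀ + (ℓ - x0 j) + (ε + x0 j) = i₀ + ℓ + ε by omega]
        exact hνR
      · show f (i₀ + ℓ + r + h * (m + r) + tstar + (Hs - h) * (m + r)) ≠ 0
        have hexp : h * (m + r) + (Hs - h) * (m + r) = Hs * (m + r) := by
          rw [← Nat.add_mul]; congr 1; omega
        rw [show i₀ + ℓ + r + h * (m + r) + tstar + (Hs - h) * (m + r)
              = i₀ + ℓ + r + Hs * (m + r) + tstar by omega]
        exact hνB'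
      · show f (i₀ + ℓ + r + Hs * (m + r) + tstar + 0) ≠ 0
        rw [Nat.add_zero]
        exact hνB'
    have hpw1 : lst1.Pairwise (fun pq pq' => f (pq.1 + pq'.2) = 0) := by
      rw [hlst1, List.pairwise_append]
      refine ⟨?_, ?_, ?_⟩
      · rw [List.pairwise_reverse, List.pairwise_map]
        refine (pairwise_range_strong L).imp ?_
        intro j1 j2 hj
        obtain ⟨hj12, hj2L⟩ := hj
        have hx2 := hx0le j2 hj2L
        have hmono := hx0mono j1 j2 hj12
        have hp1 := hx0pos j1
        show f (i₀ + (ℓ - x0 j2) + (ε + x0 j1)) = 0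
        rw [show i₀ + (ℓ - x0 j2) + (ε + x0 j1) = i₀ + (ℓ - x0 j2 + (ε + x0 j1)) by omega]
        exact hrun _ (by omega)
      · rw [List.pairwise_append]
        refine ⟨?_, ?_, ?_⟩
        · rw [List.pairwise_map]
          refine (pairwise_range_strong Hs).imp ?_
          intro h1 h2 hh
          obtain ⟨hh12, hh2⟩ := hh
          show f (i₀ + ℓ + r + h1 * (m + r) + tstar + (Hs - h2) * (m + r)) = 0
          have hexp : (h1 + (Hs - h2)) * (m + r) = h1 * (m + r) + (Hs - h2) * (m + r) := by ring
          rw [show i₀ + ℓ + r + h1 * (m + r) + tstar + (Hs - h2) * (m + r)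
                = i₀ + ℓ + r + (h1 + (Hs - h2)) * (m + r) + tstar by omega]
          exact hFblk _ (by omega) tstar htsm
        · simp
        · intro a ha' b hb'
          obtain ⟨h, hh, rfl⟩ := List.mem_map.mp ha'
          have hh' := List.mem_range.mp hh
          simp only [List.mem_singleton] at hb'
          subst hb'
          show f (i₀ + ℓ + r + h * (m + r) + tstar + 0) = 0
          rw [Nat.add_zero]
          exact hFblk _ hh' tstar htsm
      · intro a ha' b hb'
        rw [List.mem_reverse] at ha'
        obtain ⟨j, hj, rfl⟩ := List.mem_map.mp ha'
        have hjL := List.mem_range.mp hj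
        have hxle := hx0le j hjL
        have hxpos := hx0pos j
        have hdm : m * (j / m) + j % m = j := Nat.div_add_mod j m
        have hjm : j % m < m := Nat.mod_lt _ (by omega)
        have hxq : x0 j = j / m * (m + r) + (j % m + 1) := by simp only [hx0def]; omega
        rw [List.mem_append] at hb'
        rcases hb' with hb' | hb'
        · obtain ⟨h, hh, rfl⟩ := List.mem_map.mp hb'
          have hhH := List.mem_range.mp hh
          show f (i₀ + (ℓ - x0 j) + (Hs - h) * (m + r)) = 0
          rcases le_or_gt (Hs - h) (j / m) with hvq | hvq
          · have hle : (Hs - h) * (m + r) ≤ j / m * (m + r) := Nat.mul_le_mul_right _ hvq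
            rw [show i₀ + (ℓ - x0 j) + (Hs - h) * (m + r)
                  = i₀ + (ℓ - (x0 j - (Hs - h) * (m + r))) by omega]
            exact hrun _ (by omega)
          · obtain ⟨w', hw'⟩ : ∃ w', Hs - h = j / m + 1 + w' := ⟨Hs - h - (j / m) - 1, by omega⟩
            obtain ⟨W, hW⟩ : ∃ W, W = w' * (m + r) := ⟨_, rfl⟩
            obtain ⟨V, hV⟩ : ∃ V, V = (Hs - h) * (m + r) := ⟨_, rfl⟩
            obtain ⟨Q, hQ⟩ : ∃ Q, Q = j / m * (m + r) := ⟨_, rfl⟩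
            have hvexp : V = Q + (m + r) + W := by rw [hV, hQ, hW, hw']; ring
            rw [← hQ] at hxq
            rw [← hV]
            rw [show i₀ + (ℓ - x0 j) + V = i₀ + ℓ + r + W + (m - (j % m + 1)) by omega]
            rw [hW]
            have hwHs : w' < Hs := by
              have h1 : j / m + 1 + w' ≤ Hs := by rw [← hw']; exact Nat.sub_le _ _
              have h2 : w' < j / m + 1 + w' := by
                have := Nat.succ_le_of_lt (Nat.lt_succ_of_le (Nat.le_add_left w' (j / m)))
                omega
              exact lt_of_lt_of_le h2 h1
            exact hFblk w' hwHs (m - (j % m + 1)) (by omega)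
        · simp only [List.mem_singleton] at hb'
          subst hb'
          show f (i₀ + (ℓ - x0 j) + 0) = 0
          rw [Nat.add_zero]
          exact hrun _ (by omega)
    have hlen1 := hchain lst1 hmem1 hpw1
    have hlenval : lst1.length = L + (Hs + 1) := by
      simp [hlst1]
    -- final arithmetic
    obtain ⟨A', hA'⟩ : ∃ A', A' = m * k := ⟨_, rfl⟩
    obtain ⟨B', hB'⟩ : ∃ B', B' = r * k := ⟨_, rfl⟩
    have hde' : A' + B' + e = ℓ := by rw [hA', hB', ← hde]; ring
    have hLv : L = A' + min e m := by rw [hA', hLdef]; ring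
    rw [show r * k = B' by rw [hB']]
    omega
  · -- Part 2 : BCH-like bound
    intro _
    set lst2 : List (ℕ × ℕ) :=
      ((List.range ℓ).map (fun j => (i₀ + j, ℓ + ε - j))) ++ [(i₀ + ℓ + ε, 0)] with hlst2
    have hmem2 : ∀ pq ∈ lst2, f (pq.1 + pq.2) ≠ 0 := by
      intro pq hpq
      rw [hlst2, List.mem_append] at hpq
      rcases hpq with hpq | hpq
      · obtain ⟨j, hj, rfl⟩ := List.mem_map.mp hpq
        have hj' : j < ℓ := List.mem_range.mp hj
        rwa [show i₀ + j + (ℓ + ε - j) = i₀ + ℓ + ε by omega]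
      · simp only [List.mem_singleton] at hpq
        subst hpq
        simpa using hνR
    have hpw2 : lst2.Pairwise (fun pq pq' => f (pq.1 + pq'.2) = 0) := by
      rw [hlst2, List.pairwise_append]
      refine ⟨?_, ?_, ?_⟩
      · rw [List.pairwise_map]
        refine (pairwise_range_strong ℓ).imp ?_
        intro j1 j2 hj
        simp only []
        rw [show i₀ + j1 + (ℓ + ε - j2) = i₀ + (j1 + (ℓ + ε - j2)) by omega]
        exact hrun _ (by omega)
      · simp
      · intro a ha' b hb'
        obtain ⟨j, hj, rfl⟩ := List.mem_map.mp ha'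
        have hj' : j < ℓ := List.mem_range.mp hj
        simp only [List.mem_singleton] at hb'
        subst hb'
        simp only []
        rw [show i₀ + j + 0 = i₀ + j by omega]
        exact hrun j (by omega)
    have := hchain lst2 hmem2 hpw2
    have hlen : lst2.length = ℓ + 1 := by
      simp [hlst2]
    omega
end

section
/- (Hartmann–Tzeng bound.) Let C be a nonzero cyclic code of length n over F_q with generator polynomial g and distance d, and suppose gcd(n,q)=1. Suppose there exist natural numbers i_0, m, s, r with m ≥ 1, s ≥ 1, and gcd(m+r, n) = 1, such that g(α^{i_0+i+j(m+r)}) = 0 for all 0 ≤ i ≤ m−1 and all 0 ≤ j ≤ s−1. Then d ≥ m + s. -/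
open Polynomial Matrix

lemma ht_core {F : Type} [Field F] {w a b : ℕ} (ha : a ≤ w) (hb : b ≤ w)
    (x z u0 : Fin w → F) (hx : Function.Injective x) (hz : Function.Injective z)
    (hu0 : ∀ y, u0 y ≠ 0)
    (horth : ∀ (i : Fin a) (j : Fin b),
      ∑ y : Fin w, x y ^ (i : ℕ) * (u0 y * z y ^ (j : ℕ)) = 0) :
    a + b ≤ w := by
  classical
  set A : Matrix (Fin a) (Fin w) F := Matrix.of fun i y => x y ^ (i : ℕ) with hA
  set φ : (Fin w → F) →ₗ[F] (Fin a → F) := A.mulVecLin with hφ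
  have hsurj : Function.Surjective φ := by
    set pts : Fin a → F := fun k => x (Fin.castLE ha k) with hpts
    have hptsinj : Function.Injective pts := fun k l h =>
      Fin.castLE_injective ha (hx h)
    have hdet : IsUnit (Matrix.vandermonde pts)ᵀ.det := by
      rw [Matrix.det_transpose]
      exact (Matrix.det_vandermonde_ne_zero_iff.mpr hptsinj).isUnit
    haveI := Matrix.invertibleOfIsUnitDet _ hdet
    intro t
    obtain ⟨v, hv⟩ := Matrix.mulVec_surjective_of_invertible (Matrix.vandermonde pts)ᵀ t
    refine ⟨fun y => ∑ k : Fin a, if Fin.castLE ha k = y then v k else 0, ?_⟩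
    funext i
    have : ∀ y : Fin w,
        A i y * ∑ k : Fin a, (if Fin.castLE ha k = y then v k else 0)
          = ∑ k : Fin a, (if Fin.castLE ha k = y then A i (Fin.castLE ha k) * v k else 0) := by
      intro y
      rw [Finset.mul_sum]
      refine Finset.sum_congr rfl fun k _ => ?_
      split
      · next h => rw [h]
      · simp
    calc φ (fun y => ∑ k : Fin a, if Fin.castLE ha k = y then v k else 0) i
        = ∑ y : Fin w, A i y * ∑ k : Fin a, (if Fin.castLE ha k = y then v k else 0) := by
          simp [hφ, Matrix.mulVecLin_apply, Matrix.mulVec, dotProduct]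
      _ = ∑ y : Fin w, ∑ k : Fin a, (if Fin.castLE ha k = y then A i (Fin.castLE ha k) * v k else 0) := by
          exact Finset.sum_congr rfl fun y _ => this y
      _ = ∑ k : Fin a, ∑ y : Fin w, (if Fin.castLE ha k = y then A i (Fin.castLE ha k) * v k else 0) :=
          Finset.sum_comm
      _ = ∑ k : Fin a, A i (Fin.castLE ha k) * v k := by
          refine Finset.sum_congr rfl fun k _ => ?_
          simp
      _ = ((Matrix.vandermonde pts)ᵀ.mulVec v) i := by
          simp [Matrix.mulVec, dotProduct, Matrix.transpose_apply, Matrix.vandermonde,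
            hA, hpts]
      _ = t i := by rw [hv]
  have hw : Module.finrank F (Fin w → F) = w := by simp
  have hrange : Module.finrank F (LinearMap.range φ) = a := by
    rw [LinearMap.range_eq_top.mpr hsurj]
    simp
  have hrn := LinearMap.finrank_range_add_finrank_ker φ
  rw [hw, hrange] at hrn
  set u : Fin b → (Fin w → F) := fun j y => u0 y * z y ^ (j : ℕ) with hu
  have humem : ∀ j, u j ∈ LinearMap.ker φ := by
    intro j
    rw [LinearMap.mem_ker]
    funext i
    have := horth i j
    simpa [hφ, Matrix.mulVecLin_apply, Matrix.mulVec, dotProduct, hA, hu] using this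
  have huind : LinearIndependent F u := by
    rw [Fintype.linearIndependent_iff]
    intro lam hlam
    set pts' : Fin b → F := fun k => z (Fin.castLE hb k) with hpts'
    have hptsinj : Function.Injective pts' := fun k l h =>
      Fin.castLE_injective hb (hz h)
    have hsum : ∀ k : Fin b, ∑ j : Fin b, lam j * pts' k ^ (j : ℕ) = 0 := by
      intro k
      have h1 := congrFun hlam (Fin.castLE hb k)
      simp only [Finset.sum_apply, Pi.smul_apply, smul_eq_mul, hu, Pi.zero_apply] at h1
      have h2 : u0 (Fin.castLE hb k) * ∑ j : Fin b, lam j * z (Fin.castLE hb k) ^ (j : ℕ) = 0 := by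
        rw [Finset.mul_sum]
        rw [← h1]
        refine Finset.sum_congr rfl fun j _ => by ring
      rcases mul_eq_zero.mp h2 with h | h
      · exact absurd h (hu0 _)
      · exact h
    have := Matrix.eq_zero_of_forall_index_sum_mul_pow_eq_zero hptsinj hsum
    intro j
    exact congrFun this j
  have hble : b ≤ Module.finrank F (LinearMap.ker φ) := by
    let u' : Fin b → LinearMap.ker φ := fun j => ⟨u j, humem j⟩
    have hind' : LinearIndependent F u' :=
      LinearIndependent.of_comp (LinearMap.ker φ).subtype huind
    simpa using hind'.fintype_card_le_finrank
  omega

/-- The Hartmann–Tzeng bound. -/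
theorem hartmann_tzeng
    (q n : ℕ) (hq : IsPrimePow q) (hn : 1 ≤ n) (hgcd : Nat.gcd n q = 1)
    (Fq F : Type) [Field Fq] [Fintype Fq] [DecidableEq Fq]
    (hcard : Fintype.card Fq = q)
    [Field F] [Algebra Fq F]
    (hsplit : IsSplittingField Fq F (X ^ n - 1 : Polynomial Fq))
    (α : F) (hα : IsPrimitiveRoot α n)
    (g : Polynomial Fq) (hmonic : g.Monic) (hdvd : g ∣ X ^ n - 1)
    (C : Set (Fin n → Fq))
    (hC : C = { c | g ∣ ∑ i : Fin n, Polynomial.C (c i) * X ^ (i : ℕ) })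
    (wt : (Fin n → Fq) → ℕ)
    (hwt : ∀ c, wt c = (Finset.univ.filter fun i => c i ≠ 0).card)
    (d : ℕ) (hd : IsLeast { w | ∃ c ∈ C, c ≠ 0 ∧ wt c = w } d)
    (i₀ m s r : ℕ) (hm : 1 ≤ m) (hs : 1 ≤ s) (hmr : Nat.gcd (m + r) n = 1)
    (hroots : ∀ i < m, ∀ j < s, Polynomial.aeval (α ^ (i₀ + i + j * (m + r))) g = 0) :
    d ≥ m + s := by
  classical
  obtain ⟨⟨c, hcC, hc0, hwtc⟩, -⟩ := hd
  have hdvdc : g ∣ ∑ i : Fin n, Polynomial.C (c i) * X ^ (i : ℕ) := by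
    rw [hC] at hcC; exact hcC
  have hcard' : (Finset.univ.filter fun i => c i ≠ 0).card = d := by
    rw [← hwt c, hwtc]
  have hd1 : 1 ≤ d := by
    obtain ⟨y, hy⟩ := Function.ne_iff.mp hc0
    have hy' : y ∈ Finset.univ.filter fun i => c i ≠ 0 :=
      Finset.mem_filter.mpr ⟨Finset.mem_univ y, hy⟩
    have := Finset.card_pos.mpr ⟨y, hy'⟩
    omega
  have hn0 : n ≠ 0 := by omega
  have hα0 : α ≠ 0 := hα.ne_zero hn0
  have hβ : IsPrimitiveRoot (α ^ (m + r)) n := hα.pow_of_coprime (m + r) hmr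
  have hcardι : Fintype.card {y : Fin n // c y ≠ 0} = d := by
    rw [Fintype.card_subtype]; exact hcard'
  let ε : {y : Fin n // c y ≠ 0} ≃ Fin d := Fintype.equivFinOfCardEq hcardι
  let x : Fin d → F := fun y => α ^ (((ε.symm y : Fin n)) : ℕ)
  let z : Fin d → F := fun y => (α ^ (m + r)) ^ (((ε.symm y : Fin n)) : ℕ)
  let u0 : Fin d → F := fun y =>
    algebraMap Fq F (c (ε.symm y)) * α ^ (i₀ * (((ε.symm y : Fin n)) : ℕ))
  have hsubinj : Function.Injective fun y : Fin d => ((ε.symm y : Fin n) : ℕ) := by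
    intro y y' h
    exact ε.symm.injective (Subtype.coe_injective (Fin.val_injective h))
  have hx : Function.Injective x := fun y y' h =>
    hsubinj (hα.pow_inj (ε.symm y).1.isLt (ε.symm y').1.isLt h)
  have hz : Function.Injective z := fun y y' h =>
    hsubinj (hβ.pow_inj (ε.symm y).1.isLt (ε.symm y').1.isLt h)
  have hu0 : ∀ y, u0 y ≠ 0 := by
    intro y
    refine mul_ne_zero ?_ (pow_ne_zero _ hα0)
    exact fun h => (ε.symm y).2 ((_root_.map_eq_zero (algebraMap Fq F)).mp h)
  have hterm : ∀ (t : Fin n) (i j : ℕ),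
      (α ^ (t : ℕ)) ^ i * ((algebraMap Fq F (c t) * α ^ (i₀ * (t : ℕ))) *
        ((α ^ (m + r)) ^ (t : ℕ)) ^ j)
        = algebraMap Fq F (c t) * (α ^ (i₀ + i + j * (m + r))) ^ (t : ℕ) := by
    intro t i j
    rw [← pow_mul, ← pow_mul, ← pow_mul, ← pow_mul]
    rw [show (i₀ + i + j * (m + r)) * (t : ℕ)
        = (t : ℕ) * i + (i₀ * (t : ℕ) + (m + r) * (t : ℕ) * j) by ring]
    rw [pow_add, pow_add]
    ring
  have horth : ∀ (i : Fin (min m d)) (j : Fin (min s d)),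
      ∑ y : Fin d, x y ^ (i : ℕ) * (u0 y * z y ^ (j : ℕ)) = 0 := by
    intro i j
    have him : (i : ℕ) < m := lt_of_lt_of_le i.isLt (min_le_left _ _)
    have hjs : (j : ℕ) < s := lt_of_lt_of_le j.isLt (min_le_left _ _)
    set Eij : ℕ := i₀ + (i : ℕ) + (j : ℕ) * (m + r) with hEij
    have h0 : (aeval (α ^ Eij)) (∑ i' : Fin n, Polynomial.C (c i') * X ^ (i' : ℕ)) = 0 := by
      obtain ⟨h, hh⟩ := hdvdc
      rw [hh, _root_.map_mul, hroots _ him _ hjs, zero_mul]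
    have h1 : ∑ i' : Fin n, algebraMap Fq F (c i') * (α ^ Eij) ^ (i' : ℕ) = 0 := by
      simpa [map_sum, _root_.map_mul, map_pow, aeval_C, aeval_X] using h0
    calc ∑ y : Fin d, x y ^ (i : ℕ) * (u0 y * z y ^ (j : ℕ))
        = ∑ y : Fin d, algebraMap Fq F (c (ε.symm y)) * (α ^ Eij) ^ (((ε.symm y : Fin n)) : ℕ) :=
          Finset.sum_congr rfl fun y _ => hterm (ε.symm y) i j
      _ = ∑ t : {y : Fin n // c y ≠ 0},
            algebraMap Fq F (c t) * (α ^ Eij) ^ ((t : Fin n) : ℕ) :=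
          (Equiv.sum_comp ε.symm fun t => algebraMap Fq F (c t) * (α ^ Eij) ^ ((t : Fin n) : ℕ))
      _ = ∑ t ∈ Finset.univ.filter fun i' => c i' ≠ 0,
            algebraMap Fq F (c t) * (α ^ Eij) ^ (t : ℕ) := by
          exact (Finset.sum_subtype (p := fun y => c y ≠ 0)
            (Finset.univ.filter fun i' => c i' ≠ 0) (fun t => by simp)
            (fun t : Fin n => algebraMap Fq F (c t) * (α ^ Eij) ^ (t : ℕ))).symm
      _ = ∑ t : Fin n, algebraMap Fq F (c t) * (α ^ Eij) ^ (t : ℕ) := by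
          refine Finset.sum_filter_of_ne fun t _ h => ?_
          intro hct
          exact h (by rw [hct, map_zero, zero_mul])
      _ = 0 := h1
  have key := ht_core (min_le_right m d) (min_le_right s d) x z u0 hx hz hu0 horth
  omega
end

section
/- (Hartmann–Tzeng bound, Roos's improved version.) Let C be a nonzero cyclic code of length n over F_q with generator polynomial g and distance d, and suppose gcd(n,q)=1. Suppose there exist natural numbers i_0, m, s, r with m ≥ 1, s ≥ 1, and gcd(m+r, n) ≤ m, such that g(α^{i_0+i+j(m+r)}) = 0 for all 0 ≤ i ≤ m−1 and all 0 ≤ j ≤ s−1. Then d ≥ m + s. -/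
open Polynomial

/-- Vandermonde argument: if `∑ k in K, lam k * β k ^ i = 0` for all `i < K.card` and
`β` is injective on `K`, then `lam` vanishes on `K`. -/
lemma roos_vandermonde_aux {E ι : Type*} [Field E] [DecidableEq ι]
    (K : Finset ι) (β lam : ι → E) (hβ : Set.InjOn β K)
    (hsum : ∀ i < K.card, ∑ k ∈ K, lam k * β k ^ i = 0) :
    ∀ k ∈ K, lam k = 0 := by
  classical
  set w := K.card with hw
  let e : Fin w ≃ {x // x ∈ K} := K.equivFin.symm
  let v : Fin w → E := fun j => β (e j)
  have hv : Function.Injective v := by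
    intro a b hab
    have h1 := hβ (e a).2 (e b).2 hab
    exact e.injective (Subtype.ext h1)
  let M : Matrix (Fin w) (Fin w) E := (Matrix.vandermonde v).transpose
  have hdet : IsUnit M.det := by
    rw [Matrix.det_transpose, Matrix.det_vandermonde, isUnit_iff_ne_zero]
    refine Finset.prod_ne_zero_iff.2 fun i _ => Finset.prod_ne_zero_iff.2 fun j hj => ?_
    rw [Finset.mem_Ioi] at hj
    refine sub_ne_zero.2 fun h => ?_
    exact absurd (hv h) (ne_of_gt hj)
  have hmv : M.mulVec (fun j => lam (e j)) = 0 := by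
    funext i
    have h2 : ∑ j : Fin w, lam (e j) * v j ^ (i : ℕ) = 0 := by
      have h3 := hsum i i.2
      rw [← Finset.sum_coe_sort K (fun k => lam k * β k ^ (i : ℕ))] at h3
      rw [← Equiv.sum_comp e (fun x : {x // x ∈ K} => lam x * β x ^ (i : ℕ))] at h3
      exact h3
    simpa [M, Matrix.mulVec, dotProduct, Matrix.vandermonde, mul_comm] using h2
  have hinj : Function.Injective M.mulVec := Matrix.mulVec_injective_iff_isUnit.2 ((Matrix.isUnit_iff_isUnit_det M).2 hdet)
  have hz : (fun j => lam (e j)) = 0 := by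
    apply hinj
    rw [hmv, Matrix.mulVec_zero]
  intro k hk
  have := congrFun hz (K.equivFin ⟨k, hk⟩)
  simpa [e] using this

/-- Key combinatorial lemma for the Roos bound. -/
lemma roos_key {E ι : Type*} [Field E] [DecidableEq E] [DecidableEq ι] (m : ℕ) :
    ∀ s : ℕ, 1 ≤ s → ∀ (K : Finset ι) (β γ lam : ι → E),
      Set.InjOn β K → (∀ k ∈ K, lam k ≠ 0) → K.Nonempty →
      (∀ k₀ ∈ K, (K.filter fun k => γ k = γ k₀).card ≤ m) →
      (∀ i < m, ∀ j < s, ∑ k ∈ K, lam k * β k ^ i * γ k ^ j = 0) →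
      m + s ≤ K.card := by
  intro s
  induction s with
  | zero => omega
  | succ s' ih =>
    intro _ K β γ lam hβ hlam hne hclass hsum
    have hvand : ¬ K.card ≤ m := by
      intro hKm
      have h0 : ∀ i < K.card, ∑ k ∈ K, lam k * β k ^ i = 0 := by
        intro i hi
        have := hsum i (lt_of_lt_of_le hi hKm) 0 (Nat.succ_pos _)
        simpa using this
      obtain ⟨k, hk⟩ := hne
      exact hlam k hk (roos_vandermonde_aux K β lam hβ h0 k hk)
    rcases Nat.eq_zero_or_pos s' with hs0 | hs1
    · subst hs0; omega
    · obtain ⟨k₀, hk₀⟩ := hne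
      set K' := K.filter (fun k => γ k ≠ γ k₀) with hK'
      have hK'ss : K' ⊆ K := Finset.filter_subset _ _
      by_cases hKe : K' = ∅
      · exfalso
        apply hvand
        have hsub : K ⊆ K.filter fun k => γ k = γ k₀ := by
          intro k hk
          rw [Finset.mem_filter]
          refine ⟨hk, ?_⟩
          by_contra hne2
          have : k ∈ K' := Finset.mem_filter.2 ⟨hk, hne2⟩
          simp [hKe] at this
        calc K.card ≤ (K.filter fun k => γ k = γ k₀).card := Finset.card_le_card hsub
          _ ≤ m := hclass k₀ hk₀
      · have hne' : K'.Nonempty := Finset.nonempty_iff_ne_empty.2 hKe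
        set lam' : ι → E := fun k => lam k * (γ k - γ k₀) with hlam'
        have hstep : m + s' ≤ K'.card := by
          apply ih hs1 K' β γ lam' (hβ.mono (Finset.coe_subset.2 hK'ss)) ?_ hne' ?_ ?_
          · intro k hk
            rw [hK', Finset.mem_filter] at hk
            exact mul_ne_zero (hlam k hk.1) (sub_ne_zero.2 hk.2)
          · intro k₁ hk₁
            calc (K'.filter fun k => γ k = γ k₁).card
                ≤ (K.filter fun k => γ k = γ k₁).card :=
                  Finset.card_le_card (Finset.filter_subset_filter _ hK'ss)
              _ ≤ m := hclass k₁ (hK'ss hk₁)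
          · intro i hi j hj
            have hzero : ∀ k ∈ K.filter (fun k => ¬ γ k ≠ γ k₀),
                lam' k * β k ^ i * γ k ^ j = 0 := by
              intro k hk
              rw [Finset.mem_filter] at hk
              have hγk : γ k = γ k₀ := not_not.1 hk.2
              simp [hlam', hγk]
            have hsplit2 := Finset.sum_filter_add_sum_filter_not K (fun k => γ k ≠ γ k₀)
              (fun k => lam' k * β k ^ i * γ k ^ j)
            rw [Finset.sum_eq_zero hzero, add_zero] at hsplit2
            rw [hK', hsplit2]
            have expand : ∀ k ∈ K, lam' k * β k ^ i * γ k ^ j =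
                lam k * β k ^ i * γ k ^ (j + 1) - γ k₀ * (lam k * β k ^ i * γ k ^ j) := by
              intro k _
              simp only [hlam', pow_succ]
              ring
            rw [Finset.sum_congr rfl expand, Finset.sum_sub_distrib, ← Finset.mul_sum]
            rw [hsum i hi (j + 1) (by omega), hsum i hi j (by omega), mul_zero, sub_zero]
        have hlt : K'.card < K.card := by
          apply Finset.card_lt_card
          refine ⟨hK'ss, fun hsub => ?_⟩
          have := hsub hk₀
          rw [hK', Finset.mem_filter] at this
          exact this.2 rfl
        omega

/-- The Hartmann–Tzeng bound in Roos's improved version, where `gcd(m+r,n) = 1` is relaxed to `gcd(m+r,n) ≤ m`.  `C` is a nonzero cyclic code of length `n` over the finite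
field `Fq` with `q` elements, given by a monic generator polynomial `g` dividing `X^n - 1`;
`α` is a primitive `n`-th root of unity in the splitting field `F`; `wt` is the Hamming
weight and `d` the minimum distance. -/
theorem hartmann_tzeng_roos
    (q n : ℕ) (hq : IsPrimePow q) (hn : 1 ≤ n) (hgcd : Nat.gcd n q = 1)
    (Fq F : Type) [Field Fq] [Fintype Fq] [DecidableEq Fq]
    (hcard : Fintype.card Fq = q)
    [Field F] [Algebra Fq F]
    (hsplit : IsSplittingField Fq F (X ^ n - 1 : Polynomial Fq))
    (α : F) (hα : IsPrimitiveRoot α n)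
    (g : Polynomial Fq) (hmonic : g.Monic) (hdvd : g ∣ X ^ n - 1)
    (C : Set (Fin n → Fq))
    (hC : C = { c | g ∣ ∑ i : Fin n, Polynomial.C (c i) * X ^ (i : ℕ) })
    (wt : (Fin n → Fq) → ℕ)
    (hwt : ∀ c, wt c = (Finset.univ.filter fun i => c i ≠ 0).card)
    (d : ℕ) (hd : IsLeast { w | ∃ c ∈ C, c ≠ 0 ∧ wt c = w } d)
    (i₀ m s r : ℕ) (hm : 1 ≤ m) (hs : 1 ≤ s) (hmr : Nat.gcd (m + r) n ≤ m)
    (hroots : ∀ i < m, ∀ j < s, Polynomial.aeval (α ^ (i₀ + i + j * (m + r))) g = 0) :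
    d ≥ m + s := by
  classical
  obtain ⟨c, hcC, hc0, hwtc⟩ := hd.1
  subst hC
  set b := m + r with hb
  have hb1 : 1 ≤ b := by omega
  have hn0 : 0 < n := hn
  have heval : ∀ t : ℕ, Polynomial.aeval (α ^ t) g = 0 →
      ∑ k : Fin n, (algebraMap Fq F) (c k) * (α ^ t) ^ (k : ℕ) = 0 := by
    intro t hg0
    have h3 : Polynomial.aeval (α ^ t) (∑ i : Fin n, Polynomial.C (c i) * X ^ (i : ℕ)) = 0 := by
      obtain ⟨h, hh⟩ := hcC
      rw [hh, map_mul, hg0, zero_mul]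
    rw [map_sum] at h3
    calc ∑ k : Fin n, (algebraMap Fq F) (c k) * (α ^ t) ^ (k : ℕ)
        = ∑ k : Fin n, Polynomial.aeval (α ^ t) (Polynomial.C (c k) * X ^ (k : ℕ)) := by
          apply Finset.sum_congr rfl
          intro k _
          simp
      _ = 0 := h3
  set K : Finset (Fin n) := Finset.univ.filter (fun i => c i ≠ 0) with hK
  set β : Fin n → F := fun k => α ^ (k : ℕ) with hβdef
  set γ : Fin n → F := fun k => α ^ ((k : ℕ) * b) with hγdef
  set lam : Fin n → F := fun k => (algebraMap Fq F) (c k) * α ^ (i₀ * (k : ℕ)) with hlamdef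
  have hαne : α ≠ 0 := by
    intro h0
    have h1 := hα.pow_eq_one
    rw [h0, zero_pow (by omega : n ≠ 0)] at h1
    exact zero_ne_one h1
  have hKne : K.Nonempty := by
    rw [hK, Finset.filter_nonempty_iff]
    by_contra hcon
    push_neg at hcon
    apply hc0
    funext k
    have := hcon k (Finset.mem_univ k)
    simpa using this
  have hinjβ : Set.InjOn β K := by
    intro k hk k' hk' hkk
    exact Fin.ext (hα.pow_inj k.2 k'.2 hkk)
  have hlamne : ∀ k ∈ K, lam k ≠ 0 := by
    intro k hk
    rw [hK, Finset.mem_filter] at hk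
    have hck : (algebraMap Fq F) (c k) ≠ 0 := fun h0 =>
      hk.2 ((algebraMap Fq F).injective (by rw [h0, map_zero]))
    exact mul_ne_zero hck (pow_ne_zero _ hαne)
  have hclass : ∀ k₀ ∈ K, (K.filter fun k => γ k = γ k₀).card ≤ m := by
    intro k₀ _
    set g' := Nat.gcd n b with hg'
    have hg'pos : 0 < g' := Nat.gcd_pos_of_pos_left _ hn0
    have hg'dvd : g' ∣ n := Nat.gcd_dvd_left n b
    set n' := n / g' with hn'
    have hn'pos : 0 < n' := Nat.div_pos (Nat.le_of_dvd hn0 hg'dvd) hg'pos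
    have hnn' : n' * g' = n := Nat.div_mul_cancel hg'dvd
    have hg'm : g' ≤ m := by rw [hg', Nat.gcd_comm]; exact hmr
    have hmod : ∀ k ∈ K.filter (fun k => γ k = γ k₀), (k : ℕ) % n' = (k₀ : ℕ) % n' := by
      intro k hk
      rw [Finset.mem_filter] at hk
      have heq : α ^ ((k : ℕ) * b) = α ^ ((k₀ : ℕ) * b) := hk.2
      have hpowiff : ∀ a c : ℕ, α ^ a = α ^ c → a ≡ c [MOD n] := by
        intro a c' hac
        rcases le_total c' a with hle | hle
        · have hmul : α ^ c' * α ^ (a - c') = α ^ c' * 1 := by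
            rw [← pow_add, mul_one, Nat.add_sub_cancel' hle, hac]
          have h1 : α ^ (a - c') = 1 := mul_left_cancel₀ (pow_ne_zero _ hαne) hmul
          exact ((Nat.modEq_iff_dvd' hle).2 ((hα.pow_eq_one_iff_dvd _).1 h1)).symm
        · have hmul : α ^ a * α ^ (c' - a) = α ^ a * 1 := by
            rw [← pow_add, mul_one, Nat.add_sub_cancel' hle, hac]
          have h1 : α ^ (c' - a) = 1 := mul_left_cancel₀ (pow_ne_zero _ hαne) hmul
          exact (Nat.modEq_iff_dvd' hle).2 ((hα.pow_eq_one_iff_dvd _).1 h1)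
      have hmodeq : (k : ℕ) * b ≡ (k₀ : ℕ) * b [MOD n] := hpowiff _ _ heq
      have hcan : (k : ℕ) ≡ (k₀ : ℕ) [MOD n / Nat.gcd n b] := by
        apply Nat.ModEq.cancel_left_div_gcd hn0
        calc b * (k : ℕ) = (k : ℕ) * b := mul_comm _ _
          _ ≡ (k₀ : ℕ) * b [MOD n] := hmodeq
          _ = b * (k₀ : ℕ) := mul_comm _ _
      exact hcan
    calc (K.filter fun k => γ k = γ k₀).card
        ≤ (Finset.univ : Finset (Fin g')).card := by
          apply Finset.card_le_card_of_injOn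
            (fun k => ⟨(k : ℕ) / n', by
              rw [Nat.div_lt_iff_lt_mul hn'pos, mul_comm]
              exact lt_of_lt_of_le k.2 (le_of_eq hnn'.symm)⟩)
          · intro k _; exact Finset.mem_univ _
          · intro k hk k' hk' hdiv
            have h1 := hmod k hk
            have h2 := hmod k' hk'
            have hdiv' : (k : ℕ) / n' = (k' : ℕ) / n' := by
              simpa using congrArg Fin.val hdiv
            apply Fin.ext
            calc (k : ℕ) = n' * ((k : ℕ) / n') + (k : ℕ) % n' := (Nat.div_add_mod _ _).symm
              _ = n' * ((k' : ℕ) / n') + (k' : ℕ) % n' := by rw [hdiv', h1, ← h2]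
              _ = (k' : ℕ) := Nat.div_add_mod _ _
      _ = g' := by simp
      _ ≤ m := hg'm
  have hsum : ∀ i < m, ∀ j < s, ∑ k ∈ K, lam k * β k ^ i * γ k ^ j = 0 := by
    intro i hi j hj
    have h1 := heval (i₀ + i + j * b) (hroots i hi j hj)
    have h2 : ∑ k ∈ K, lam k * β k ^ i * γ k ^ j
        = ∑ k : Fin n, lam k * β k ^ i * γ k ^ j := by
      rw [hK]
      apply Finset.sum_filter_of_ne
      intro k _ hne hck
      apply hne
      rw [hlamdef]
      simp [hck]
    rw [h2, ← h1]
    apply Finset.sum_congr rfl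
    intro k _
    rw [hlamdef, hβdef, hγdef]
    simp only [← pow_mul, ← pow_add]
    rw [mul_assoc, mul_assoc, ← pow_add, ← pow_add]
    congr 1
    ring
  have hfinal := roos_key m s hs K β γ lam hinjβ hlamne hKne hclass hsum
  have hdK : d = K.card := by rw [← hwtc, hwt, hK]
  omega
end

section
/- (Betti–Sala bound.) Let C be a nonzero cyclic code of length n over F_q with defining set S_C and distance d, and suppose gcd(n,q)=1. Suppose there are natural numbers λ, μ ≥ 1 and an index i_0 ∈ {0,…,n−1} such that either: (i) (i_0+j)_n ∈ S_C for all j = 0,…,λμ−1 and for all j = (λ+h)μ+1,…,(λ+h)μ+μ−1 with 0 ≤ h ≤ λ; or (ii) (i_0+j)_n ∈ S_C for all j = hμ,…,hμ+μ−2 with 0 ≤ h ≤ λ and for all j = (λ+1)μ,…,(2λ+1)μ−1. Then d ≥ λμ + μ. -/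
open Polynomial

lemma expsum_key {F : Type} [Field F] {ι : Type} (s : Finset ι) (u β : ι → F)
    (p : Polynomial F) (x N : ℕ) (hN : p.natDegree < N) :
    ∑ j ∈ Finset.range N, p.coeff j * ∑ t ∈ s, u t * β t ^ (x + j)
      = ∑ t ∈ s, u t * β t ^ x * p.eval (β t) := by
  simp_rw [Finset.mul_sum]
  rw [Finset.sum_comm]
  refine Finset.sum_congr rfl fun t _ => ?_
  rw [Polynomial.eval_eq_sum_range' hN, Finset.mul_sum]
  refine Finset.sum_congr rfl fun j _ => ?_
  rw [pow_add]; ring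

lemma vandermonde_expsum {F : Type} [Field F] {ι : Type} [DecidableEq ι]
    (s : Finset ι) (u β : ι → F) (hinj : Set.InjOn β s)
    (h0 : ∀ j, j < s.card → ∑ t ∈ s, u t * β t ^ j = 0) : ∀ t ∈ s, u t = 0 := by
  intro t₀ ht₀
  set p : Polynomial F := ∏ t ∈ s.erase t₀, (X - C (β t)) with hp
  have hpdeg : p.natDegree < s.card := by
    rw [hp, Polynomial.natDegree_prod _ _ (fun i _ => X_sub_C_ne_zero _)]
    simp only [natDegree_X_sub_C, Finset.sum_const, smul_eq_mul, mul_one]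
    rw [Finset.card_erase_of_mem ht₀]
    have : 0 < s.card := Finset.card_pos.mpr ⟨t₀, ht₀⟩
    omega
  have key := expsum_key s u β p 0 s.card hpdeg
  have h2 : ∑ t ∈ s, u t * β t ^ 0 * p.eval (β t) = 0 := by
    rw [← key]
    apply Finset.sum_eq_zero; intro j hj
    rw [zero_add, h0 j (Finset.mem_range.mp hj), mul_zero]
  rw [Finset.sum_eq_single t₀] at h2
  · have hev : p.eval (β t₀) ≠ 0 := by
      rw [hp, Polynomial.eval_prod]
      apply Finset.prod_ne_zero_iff.mpr
      intro t ht
      simp only [eval_sub, eval_X, eval_C]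
      refine sub_ne_zero.mpr fun h => (Finset.mem_erase.mp ht).1 ?_
      exact hinj (Finset.mem_erase.mp ht).2 ht₀ h.symm
    rw [pow_zero, mul_one] at h2
    rcases mul_eq_zero.mp h2 with h | h
    · exact h
    · exact absurd h hev
  · intro t ht hne
    have : p.eval (β t) = 0 := by
      rw [hp, Polynomial.eval_prod]
      apply Finset.prod_eq_zero (Finset.mem_erase.mpr ⟨hne, ht⟩)
      simp
    rw [this, mul_zero]
  · intro h; exact absurd ht₀ h

lemma bs_core {F : Type} [Field F] {ι : Type} [DecidableEq ι]
    (s : Finset ι) (u β : ι → F) (hu : ∀ t ∈ s, u t ≠ 0)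
    (hβ0 : ∀ t ∈ s, β t ≠ 0) (hinj : Set.InjOn β s) (hne : s.Nonempty)
    (lam μ : ℕ) (hμ : 1 ≤ μ)
    (hzero : ∀ j, j < (2 * lam + 1) * μ → (∀ h ≤ lam, j ≠ (lam + h) * μ) →
      ∑ t ∈ s, u t * β t ^ j = 0) :
    lam * μ + μ ≤ s.card := by
  classical
  by_contra hcard
  push_neg at hcard
  obtain ⟨t₀, ht₀⟩ := hne
  have hbig : lam * μ + (lam * μ + μ) = (2 * lam + 1) * μ := by ring
  have hvand : ¬(∀ j, j < s.card → ∑ t ∈ s, u t * β t ^ j = 0) := by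
    intro h
    exact hu t₀ ht₀ (vandermonde_expsum s u β hinj h t₀ ht₀)
  have hw1 : lam * μ < s.card := by
    by_contra hle
    push_neg at hle
    apply hvand
    intro j hj
    refine hzero j (by omega) ?_
    intro h hh
    have : lam * μ ≤ (lam + h) * μ := Nat.mul_le_mul_right _ (by omega)
    omega
  have hT : ∑ t ∈ s, u t * β t ^ (lam * μ) ≠ 0 := by
    intro h0
    apply hvand
    intro j hj
    by_cases hj0 : j = lam * μ
    · rwa [hj0]
    · refine hzero j (by omega) ?_
      intro h hh
      rcases Nat.eq_zero_or_pos h with rfl | h1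
      · simpa using hj0
      · have : lam * μ + μ ≤ (lam + h) * μ := by
          have h2 : (lam + 1) * μ ≤ (lam + h) * μ := Nat.mul_le_mul_right _ (by omega)
          have h3 : (lam + 1) * μ = lam * μ + μ := by ring
          omega
        omega
  set σ : Polynomial F := ∏ t ∈ s, (X - C (β t)) with hσ
  have hσdeg : σ.natDegree = s.card := by
    rw [hσ, Polynomial.natDegree_prod _ _ (fun i _ => X_sub_C_ne_zero _)]
    simp [natDegree_X_sub_C]
  have hσ0 : σ.coeff 0 ≠ 0 := by
    rw [Polynomial.coeff_zero_eq_eval_zero, hσ, Polynomial.eval_prod]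
    apply Finset.prod_ne_zero_iff.mpr
    intro t ht
    simp only [eval_sub, eval_X, eval_C, zero_sub, neg_ne_zero]
    exact hβ0 t ht
  set D := Nat.findGreatest (fun m => σ.coeff (m * μ) ≠ 0) lam with hD
  have hPD : σ.coeff (D * μ) ≠ 0 :=
    Nat.findGreatest_spec (P := fun m => σ.coeff (m * μ) ≠ 0) (Nat.zero_le lam)
      (show σ.coeff (0 * μ) ≠ 0 by simpa using hσ0)
  have hDle : D ≤ lam := Nat.findGreatest_le lam
  have hDmax : ∀ m, D < m → m ≤ lam → σ.coeff (m * μ) = 0 := by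
    intro m h1 h2
    have := Nat.findGreatest_is_greatest (P := fun m => σ.coeff (m * μ) ≠ 0) h1 h2
    exact not_not.mp this
  have hDμ : D * μ ≤ lam * μ := Nat.mul_le_mul_right _ hDle
  have hLD : (lam - D) * μ ≤ lam * μ := Nat.mul_le_mul_right _ (Nat.sub_le _ _)
  have hexp : (lam - D) * μ + D * μ = lam * μ := by
    rw [← Nat.add_mul]; congr 1; omega
  have heq : ∑ j ∈ Finset.range (s.card + 1),
      σ.coeff j * ∑ t ∈ s, u t * β t ^ ((lam - D) * μ + j) = 0 := by
    rw [expsum_key s u β σ ((lam - D) * μ) (s.card + 1) (by omega)]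
    apply Finset.sum_eq_zero; intro t ht
    have : σ.eval (β t) = 0 := by
      rw [hσ, Polynomial.eval_prod]
      apply Finset.prod_eq_zero ht
      simp
    rw [this, mul_zero]
  rw [Finset.sum_eq_single (D * μ)] at heq
  · rw [hexp] at heq
    exact (mul_ne_zero hPD hT) heq
  · intro j hjr hjne
    rw [Finset.mem_range] at hjr
    by_cases hex : ∃ h, h ≤ lam ∧ (lam - D) * μ + j = (lam + h) * μ
    · obtain ⟨h, hh, hedge⟩ := hex
      have hsplit : (lam + h) * μ = (lam - D) * μ + (D + h) * μ := by
        rw [← Nat.add_mul]; congr 1; omega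
      have hj' : j = (D + h) * μ := by omega
      have hne0 : h ≠ 0 := by
        rintro rfl
        apply hjne
        rw [hj']
        simp
      have hcz : σ.coeff ((D + h) * μ) = 0 := by
        rcases le_or_gt (D + h) lam with hle | hgt
        · exact hDmax _ (by omega) hle
        · apply Polynomial.coeff_eq_zero_of_natDegree_lt
          rw [hσdeg]
          have h2 : (lam + 1) * μ ≤ (D + h) * μ := Nat.mul_le_mul_right _ (by omega)
          have h3 : (lam + 1) * μ = lam * μ + μ := by ring
          omega
      rw [hj', hcz, zero_mul]
    · push_neg at hex
      rw [hzero _ (by omega) (fun h hh => hex h hh), mul_zero]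
  · intro habs
    exact absurd (Finset.mem_range.mpr (by omega)) habs

/-- The Betti–Sala bound.  `C` is a nonzero cyclic code of length `n` over the finite field
`Fq` with `q` elements, given by a monic generator polynomial `g` dividing `X^n - 1`; `SC`
is its complete defining set with respect to a primitive `n`-th root of unity `α` in the
splitting field `F`; `wt` is the Hamming weight and `d` the minimum distance.  `lam` plays
the role of `λ`.  The ranges `j ≤ a + μ - 1` and `j ≤ a + μ - 2` are expressed as
`j + 1 ≤ a + μ` and `j + 2 ≤ a + μ` to avoid truncated subtraction. -/
theorem betti_sala
    (q n : ℕ) (hq : IsPrimePow q) (hn : 1 ≤ n) (hgcd : Nat.gcd n q = 1)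
    (Fq F : Type) [Field Fq] [Fintype Fq] [DecidableEq Fq]
    (hcard : Fintype.card Fq = q)
    [Field F] [Algebra Fq F]
    (hsplit : IsSplittingField Fq F (X ^ n - 1 : Polynomial Fq))
    (α : F) (hα : IsPrimitiveRoot α n)
    (g : Polynomial Fq) (hmonic : g.Monic) (hdvd : g ∣ X ^ n - 1)
    (C : Set (Fin n → Fq))
    (hC : C = { c | g ∣ ∑ i : Fin n, Polynomial.C (c i) * X ^ (i : ℕ) })
    (SC : Set ℕ)
    (hSC : SC = { i | i < n ∧ Polynomial.aeval (α ^ i) g = 0 })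
    (wt : (Fin n → Fq) → ℕ)
    (hwt : ∀ c, wt c = (Finset.univ.filter fun i => c i ≠ 0).card)
    (d : ℕ) (hd : IsLeast { w | ∃ c ∈ C, c ≠ 0 ∧ wt c = w } d)
    (lam μ i₀ : ℕ) (hlam : 1 ≤ lam) (hμ : 1 ≤ μ) (hi₀ : i₀ < n)
    (heither :
      ((∀ j < lam * μ, (i₀ + j) % n ∈ SC) ∧
        (∀ h ≤ lam, ∀ j, (lam + h) * μ + 1 ≤ j → j + 1 ≤ (lam + h) * μ + μ →
          (i₀ + j) % n ∈ SC))
      ∨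
      ((∀ h ≤ lam, ∀ j, h * μ ≤ j → j + 2 ≤ h * μ + μ → (i₀ + j) % n ∈ SC) ∧
        (∀ j, (lam + 1) * μ ≤ j → j + 1 ≤ (2 * lam + 1) * μ → (i₀ + j) % n ∈ SC))) :
    d ≥ lam * μ + μ := by
  classical
  obtain ⟨⟨c, hcC, hc0, hwtc⟩, -⟩ := hd
  rw [hC] at hcC
  set s : Finset (Fin n) := Finset.univ.filter (fun i => c i ≠ 0) with hs
  have hdcard : d = s.card := by rw [← hwtc, hwt c]
  have hsne : s.Nonempty := by
    rcases Function.ne_iff.mp hc0 with ⟨i, hi⟩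
    exact ⟨i, by simp [hs]; exact hi⟩
  have hαne : α ≠ 0 := by
    intro h
    have h1 := hα.pow_eq_one
    rw [h, zero_pow (by omega : n ≠ 0)] at h1
    exact one_ne_zero h1.symm
  have hper : ∀ m : ℕ, α ^ (m % n) = α ^ m := by
    intro m
    conv_rhs => rw [← Nat.mod_add_div m n]
    rw [pow_add, pow_mul, hα.pow_eq_one, one_pow, mul_one]
  have hs_sum : ∀ m : ℕ, (Polynomial.aeval (α ^ m))
        (∑ i : Fin n, Polynomial.C (c i) * X ^ (i : ℕ))
      = ∑ t ∈ s, algebraMap Fq F (c t) * α ^ (m * (t : ℕ)) := by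
    intro m
    calc (Polynomial.aeval (α ^ m)) (∑ i : Fin n, Polynomial.C (c i) * X ^ (i : ℕ))
        = ∑ i : Fin n, algebraMap Fq F (c i) * α ^ (m * (i : ℕ)) := by
          rw [map_sum]
          refine Finset.sum_congr rfl fun i _ => ?_
          rw [map_mul, aeval_C, map_pow, aeval_X, ← pow_mul]
      _ = ∑ t ∈ s, algebraMap Fq F (c t) * α ^ (m * (t : ℕ)) := by
          refine (Finset.sum_filter_of_ne ?_).symm
          intro x _ hx hcx
          exact hx (by rw [hcx, map_zero, zero_mul])
  have hzeroSC : ∀ e : ℕ, (i₀ + e) % n ∈ SC →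
      ∑ t ∈ s, algebraMap Fq F (c t) * α ^ ((i₀ + e) * (t : ℕ)) = 0 := by
    intro e he
    rw [hSC] at he
    obtain ⟨-, hg0⟩ := he
    obtain ⟨q', hq'⟩ := hcC
    have h0 : (Polynomial.aeval (α ^ ((i₀ + e) % n)))
        (∑ i : Fin n, Polynomial.C (c i) * X ^ (i : ℕ)) = 0 := by
      rw [hq', map_mul, hg0, zero_mul]
    rw [hs_sum] at h0
    rw [← h0]
    refine Finset.sum_congr rfl fun t _ => ?_
    congr 1
    rw [pow_mul, pow_mul, hper]
  have hform : ∀ e : ℕ, ∑ t ∈ s,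
      (algebraMap Fq F (c t) * α ^ (i₀ * (t : ℕ))) * (α ^ (t : ℕ)) ^ e
      = ∑ t ∈ s, algebraMap Fq F (c t) * α ^ ((i₀ + e) * (t : ℕ)) := by
    intro e
    refine Finset.sum_congr rfl fun t _ => ?_
    rw [← pow_mul, mul_assoc, ← pow_add]
    congr 2
    ring
  have hu : ∀ t ∈ s, algebraMap Fq F (c t) * α ^ (i₀ * (t : ℕ)) ≠ 0 := by
    intro t ht
    have hct : c t ≠ 0 := by simpa [hs] using ht
    exact mul_ne_zero (fun h => hct ((map_eq_zero_iff _ (algebraMap Fq F).injective).mp h))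
      (pow_ne_zero _ hαne)
  have hβ0 : ∀ t : Fin n, t ∈ s → (α ^ (t : ℕ) : F) ≠ 0 := fun t _ => pow_ne_zero _ hαne
  have hinj : Set.InjOn (fun t : Fin n => α ^ (t : ℕ)) s := by
    intro t _ t' _ h
    exact Fin.ext (hα.pow_inj t.isLt t'.isLt h)
  rcases heither with ⟨h1, h2⟩ | ⟨h1, h2⟩
  · -- case (i)
    have hz : ∀ j, j < (2 * lam + 1) * μ → (∀ h ≤ lam, j ≠ (lam + h) * μ) →
        ∑ t ∈ s, (algebraMap Fq F (c t) * α ^ (i₀ * (t : ℕ))) * (α ^ (t : ℕ)) ^ j = 0 := by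
      intro j hj hhole
      rw [hform j]
      apply hzeroSC
      by_cases hjs : j < lam * μ
      · exact h1 j hjs
      · push_neg at hjs
        have hdm := Nat.div_add_mod (j - lam * μ) μ
        set hh := (j - lam * μ) / μ with hhh
        set r := (j - lam * μ) % μ with hr
        have hrlt : r < μ := Nat.mod_lt _ (by omega)
        have hmc : μ * hh = hh * μ := Nat.mul_comm _ _
        have hb : lam * μ + ((lam + 1) * μ) = (2 * lam + 1) * μ := by ring
        have hb2 : (lam + 1) * μ = lam * μ + μ := by ring
        have hhle : hh ≤ lam := by
          by_contra hgt
          push_neg at hgt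
          have : (lam + 1) * μ ≤ hh * μ := Nat.mul_le_mul_right _ (by omega)
          omega
        have hjform : j = (lam + hh) * μ + r := by
          have : (lam + hh) * μ = lam * μ + hh * μ := by ring
          omega
        rcases Nat.eq_zero_or_pos r with hr0 | hrpos
        · exact absurd (by omega) (hhole hh hhle)
        · exact h2 hh hhle j (by omega) (by omega)
    have hcore := bs_core s _ _ hu hβ0 hinj hsne lam μ hμ hz
    omega
  · -- case (ii): mirror
    set N := (2 * lam + 1) * μ - 1 with hN
    have hz : ∀ j, j < (2 * lam + 1) * μ → (∀ h ≤ lam, j ≠ (lam + h) * μ) →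
        ∑ t ∈ s, ((algebraMap Fq F (c t) * α ^ (i₀ * (t : ℕ))) * (α ^ (t : ℕ)) ^ N)
          * ((α ^ (t : ℕ))⁻¹ : F) ^ j = 0 := by
      intro j hj hhole
      have hjN : j ≤ N := by omega
      have hstep : ∀ t ∈ s, ((algebraMap Fq F (c t) * α ^ (i₀ * (t : ℕ))) * (α ^ (t : ℕ)) ^ N)
          * ((α ^ (t : ℕ))⁻¹ : F) ^ j
          = (algebraMap Fq F (c t) * α ^ (i₀ * (t : ℕ))) * (α ^ (t : ℕ)) ^ (N - j) := by
        intro t ht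
        have hbne : (α ^ (t : ℕ) : F) ^ j ≠ 0 := pow_ne_zero _ (hβ0 t ht)
        rw [inv_pow]
        field_simp
        conv_rhs => rw [mul_assoc, ← pow_add]
        have hNj : N - j + j = N := by omega
        rw [add_comm j, hNj]
      rw [Finset.sum_congr rfl hstep, hform (N - j)]
      apply hzeroSC
      by_cases hc1 : (lam + 1) * μ ≤ N - j
      · exact h2 (N - j) hc1 (by omega)
      · push_neg at hc1
        have hdm := Nat.div_add_mod (N - j) μ
        set hh := (N - j) / μ with hhh
        set r := (N - j) % μ with hr
        have hrlt : r < μ := Nat.mod_lt _ (by omega)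
        have hmc : μ * hh = hh * μ := Nat.mul_comm _ _
        have hb2 : (lam + 1) * μ = lam * μ + μ := by ring
        have hhle : hh ≤ lam := by
          by_contra hgt
          push_neg at hgt
          have : (lam + 1) * μ ≤ hh * μ := Nat.mul_le_mul_right _ (by omega)
          omega
        rcases Nat.lt_or_ge r (μ - 1) with hrs | hrbig
        · exact h1 hh hhle (N - j) (by omega) (by omega)
        · -- r = μ - 1, so j is a forbidden hole
          exfalso
          have hrm : r = μ - 1 := by omega
          have e1 : (lam + (lam - hh)) * μ + (hh * μ + μ)
              = (lam + (lam - hh) + hh + 1) * μ := by ring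
          have e2 : lam + (lam - hh) + hh + 1 = 2 * lam + 1 := by omega
          have e3 : (lam + (lam - hh)) * μ + (hh * μ + μ) = (2 * lam + 1) * μ := by
            rw [e1, e2]
          exact hhole (lam - hh) (Nat.sub_le _ _) (by omega)
    have hu' : ∀ t ∈ s, (algebraMap Fq F (c t) * α ^ (i₀ * (t : ℕ))) * (α ^ (t : ℕ)) ^ N ≠ 0 :=
      fun t ht => mul_ne_zero (hu t ht) (pow_ne_zero _ (hβ0 t ht))
    have hβ0' : ∀ t : Fin n, t ∈ s → ((α ^ (t : ℕ))⁻¹ : F) ≠ 0 :=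
      fun t ht => inv_ne_zero (hβ0 t ht)
    have hinj' : Set.InjOn (fun t : Fin n => ((α ^ (t : ℕ))⁻¹ : F)) s := by
      intro t ht t' ht' h
      exact hinj ht ht' (inv_injective h)
    have hcore := bs_core s _ _ hu' hβ0' hinj' hsne lam μ hμ hz
    omega
end

section
/- (Blahut's Theorem.) Let C be a cyclic code of length n over F_q with gcd(n,q)=1, let F be the splitting field of x^n−1 over F_q and α ∈ F a primitive n-th root of unity. Then for every word c ∈ C, the Hamming weight of c equals the rank over F of the circulant matrix associated to DFT(c): w(c) = rk(M(DFT(c))). In particular, if C ≠ 0, its distance satisfies d = min{ rk(M(DFT(c))) : c ∈ C, c ≠ 0 }. -/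
open Polynomial

/-- The Discrete Fourier Transform of a vector `a ∈ F^n` with respect to a primitive `n`-th
root of unity `α`: `(dft α a) i = ∑ j, a j * α ^ (i * j)`. -/
def dft {F : Type} [Field F] {n : ℕ} (α : F) (a : Fin n → F) : Fin n → F :=
  fun i => ∑ j : Fin n, a j * α ^ ((i : ℕ) * (j : ℕ))

/-- The circulant matrix associated to a vector `a`, whose first row is `a` and each
subsequent row is the cyclic right shift of the previous one: `M[i,j] = a_{(j-i) mod n}`. -/
def circulantOf {K : Type} [Field K] {n : ℕ} (a : Fin n → K) : Matrix (Fin n) (Fin n) K :=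
  Matrix.of fun i j => a (j - i)

lemma vandermonde_det_ne_zero {F : Type} [Field F] {n : ℕ} {β : F}
    (hβ : IsPrimitiveRoot β n) :
    (Matrix.vandermonde fun k : Fin n => β ^ (k : ℕ)).det ≠ 0 := by
  rw [Matrix.det_vandermonde]
  refine Finset.prod_ne_zero_iff.mpr fun i _ => Finset.prod_ne_zero_iff.mpr fun j hj => ?_
  rw [sub_ne_zero]
  intro h
  have hij : i < j := Finset.mem_Ioi.mp hj
  have := hβ.pow_inj j.isLt i.isLt h
  simp only [Fin.lt_def] at hij
  omega

lemma circulant_dft_rank {F : Type} [Field F] [DecidableEq F] {n : ℕ} (hn : 1 ≤ n) (α : F)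
    (hα : IsPrimitiveRoot α n) (a : Fin n → F) :
    (circulantOf (dft α a)).rank = (Finset.univ.filter fun i => a i ≠ 0).card := by
  haveI : NeZero n := ⟨by omega⟩
  have hαne : α ≠ 0 := hα.ne_zero (by omega)
  have e : ∀ m : ℕ, α ^ m = α ^ (m % n) := fun m => by
    conv_lhs => rw [← Nat.div_add_mod m n]
    rw [pow_add, pow_mul, hα.pow_eq_one, one_pow, one_mul]
  set V : Matrix (Fin n) (Fin n) F := Matrix.vandermonde (fun k => α ^ (k : ℕ)) with hV
  set W : Matrix (Fin n) (Fin n) F := Matrix.vandermonde (fun k => α⁻¹ ^ (k : ℕ)) with hW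
  have hDV : Matrix.diagonal a * V = Matrix.of (fun k j : Fin n => a k * α ^ ((k : ℕ) * (j : ℕ))) := by
    ext k j
    simp [hV, Matrix.diagonal_mul, Matrix.vandermonde_apply, ← pow_mul]
  have key : circulantOf (dft α a) = W * (Matrix.diagonal a * V) := by
    rw [hDV]
    ext i j
    simp only [circulantOf, dft, Matrix.mul_apply, Matrix.of_apply, hW,
      Matrix.vandermonde_apply]
    refine Finset.sum_congr rfl fun k _ => ?_
    have h3 : (((j - i : Fin n) : ℕ) + (i : ℕ)) % n = (j : ℕ) % n := by
      have h0 : ((j - i) + i : Fin n) = j := sub_add_cancel j i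
      calc (((j - i : Fin n) : ℕ) + (i : ℕ)) % n = (((j - i) + i : Fin n) : ℕ) := by
            rw [Fin.val_add]
        _ = (j : ℕ) % n := by rw [h0, Nat.mod_eq_of_lt j.isLt]
    have h1 : α ^ (((j - i : Fin n) : ℕ) * (k : ℕ)) * α ^ ((i : ℕ) * (k : ℕ))
        = α ^ ((j : ℕ) * (k : ℕ)) := by
      rw [← pow_add, ← add_mul, e ((((j - i : Fin n) : ℕ) + (i : ℕ)) * (k : ℕ)),
        e ((j : ℕ) * (k : ℕ)), Nat.mul_mod, h3, ← Nat.mul_mod]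
    have hpne : α ^ ((i : ℕ) * (k : ℕ)) ≠ 0 := pow_ne_zero _ hαne
    -- goal: a k * α ^ ((j - i).val * k) = (α⁻¹ ^ ↑i) ^ ↑k * (a k * α ^ (k * j))
    rw [← pow_mul, inv_pow, mul_comm ((k : ℕ)) ((j : ℕ))]
    field_simp
    linear_combination a k * h1
  have hdetV : IsUnit V.det := (vandermonde_det_ne_zero hα).isUnit
  have hdetW : IsUnit W.det := (vandermonde_det_ne_zero hα.inv).isUnit
  rw [key, Matrix.rank_mul_eq_right_of_isUnit_det W _ hdetW,
    Matrix.rank_mul_eq_left_of_isUnit_det V _ hdetV, Matrix.rank_diagonal,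
    Fintype.card_subtype]

/-- Blahut's theorem: the Hamming weight of any codeword of a cyclic code equals the rank
of the circulant matrix associated to its Discrete Fourier Transform, and consequently the
distance of a nonzero cyclic code is the minimum of these ranks over nonzero codewords. -/
theorem blahut
    (q n : ℕ) (hq : IsPrimePow q) (hn : 1 ≤ n) (hgcd : Nat.gcd n q = 1)
    (Fq F : Type) [Field Fq] [Fintype Fq] [DecidableEq Fq]
    (hcard : Fintype.card Fq = q)
    [Field F] [Algebra Fq F]
    (hsplit : IsSplittingField Fq F (X ^ n - 1 : Polynomial Fq))
    (α : F) (hα : IsPrimitiveRoot α n)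
    (g : Polynomial Fq) (hmonic : g.Monic) (hdvd : g ∣ X ^ n - 1)
    (C : Set (Fin n → Fq))
    (hC : C = { c | g ∣ ∑ i : Fin n, Polynomial.C (c i) * X ^ (i : ℕ) })
    (wt : (Fin n → Fq) → ℕ)
    (hwt : ∀ c, wt c = (Finset.univ.filter fun i => c i ≠ 0).card) :
    (∀ c ∈ C, wt c = (circulantOf (dft α fun j => algebraMap Fq F (c j))).rank) ∧
    (∀ d : ℕ, IsLeast { w | ∃ c ∈ C, c ≠ 0 ∧ wt c = w } d →
      IsLeast { k | ∃ c ∈ C, c ≠ 0 ∧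
        (circulantOf (dft α fun j => algebraMap Fq F (c j))).rank = k } d) := by
  classical
  have main : ∀ c : Fin n → Fq,
      wt c = (circulantOf (dft α fun j => algebraMap Fq F (c j))).rank := by
    intro c
    rw [circulant_dft_rank hn α hα, hwt]
    congr 1
    ext i
    simp [_root_.map_eq_zero]
  refine ⟨fun c _ => main c, fun d hd => ?_⟩
  have hsets : { k | ∃ c ∈ C, c ≠ 0 ∧
      (circulantOf (dft α fun j => algebraMap Fq F (c j))).rank = k }
      = { w | ∃ c ∈ C, c ≠ 0 ∧ wt c = w } := by
    ext k
    constructor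
    · rintro ⟨c, hcC, hc0, hck⟩
      exact ⟨c, hcC, hc0, by rw [main c, hck]⟩
    · rintro ⟨c, hcC, hc0, hck⟩
      exact ⟨c, hcC, hc0, by rw [← main c, hck]⟩
  rw [hsets]
  exact hd
end

section
/- Let C be a nonzero cyclic code of length n over F_q with gcd(n,q)=1, defining set S_C and distance d, and let F be the splitting field of x^n−1 over F_q. Then d ≥ min{ rk(M(v)) : v ∈ F^n, v ≠ 0, and v_i = 0 for every i ∈ S_C }, where rk(M(v)) is the rank over F of the circulant matrix associated to v. -/
open Polynomial

/-- The Schaub-type bound at the field level: the distance `d` of a nonzero cyclic code is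
at least the minimum rank of the circulant matrix of a nonzero vector of `F^n` vanishing
on the defining set `SC`. -/
theorem schaub_field_level
    (q n : ℕ) (hq : IsPrimePow q) (hn : 1 ≤ n) (hgcd : Nat.gcd n q = 1)
    (Fq F : Type) [Field Fq] [Fintype Fq] [DecidableEq Fq]
    (hcard : Fintype.card Fq = q)
    [Field F] [Algebra Fq F]
    (hsplit : IsSplittingField Fq F (X ^ n - 1 : Polynomial Fq))
    (α : F) (hα : IsPrimitiveRoot α n)
    (g : Polynomial Fq) (hmonic : g.Monic) (hdvd : g ∣ X ^ n - 1)
    (C : Set (Fin n → Fq))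
    (hC : C = { c | g ∣ ∑ i : Fin n, Polynomial.C (c i) * X ^ (i : ℕ) })
    (SC : Set ℕ)
    (hSC : SC = { i | i < n ∧ Polynomial.aeval (α ^ i) g = 0 })
    (wt : (Fin n → Fq) → ℕ)
    (hwt : ∀ c, wt c = (Finset.univ.filter fun i => c i ≠ 0).card)
    (d : ℕ) (hd : IsLeast { w | ∃ c ∈ C, c ≠ 0 ∧ wt c = w } d) :
    sInf { k | ∃ v : Fin n → F, v ≠ 0 ∧ (∀ i : Fin n, (i : ℕ) ∈ SC → v i = 0) ∧
      (circulantOf v).rank = k } ≤ d := by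
  classical
  obtain ⟨c, hcC, hc0, hwtc⟩ := hd.1
  set p : Polynomial Fq := ∑ i : Fin n, Polynomial.C (c i) * X ^ (i : ℕ) with hp
  have hgp : g ∣ p := by rw [hC] at hcC; exact hcC
  set v : Fin n → F := fun i => Polynomial.aeval (α ^ (i : ℕ)) p with hv
  have hα1 : α ^ n = 1 := hα.pow_eq_one
  have key : ∀ a b : ℕ, a % n = b % n → α ^ a = α ^ b := by
    intro a b h
    rw [pow_eq_pow_mod a hα1, pow_eq_pow_mod b hα1, h]
  have hαne : α ≠ 0 := by
    intro h
    rw [h, zero_pow (by omega)] at hα1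
    exact zero_ne_one hα1
  have hinj : Function.Injective (algebraMap Fq F) := (algebraMap Fq F).injective
  -- v vanishes on SC
  have hvan : ∀ i : Fin n, (i : ℕ) ∈ SC → v i = 0 := by
    intro i hi
    rw [hSC] at hi
    obtain ⟨t, ht⟩ := hgp
    simp only [hv, ht, map_mul, hi.2, zero_mul]
  -- degree bound
  have hdeg : p.natDegree < n := by
    have : p.natDegree ≤ n - 1 := by
      apply Polynomial.natDegree_sum_le_of_forall_le
      intro i _
      exact le_trans (Polynomial.natDegree_C_mul_X_pow_le _ _) (by omega)
    omega
  -- coefficients of p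
  have hcoeff : ∀ i : Fin n, p.coeff (i : ℕ) = c i := by
    intro i
    rw [hp, Polynomial.finset_sum_coeff]
    rw [Finset.sum_eq_single i]
    · simp
    · intro j _ hj
      have : (i : ℕ) ≠ (j : ℕ) := fun h => hj (Fin.ext h.symm)
      simp [Polynomial.coeff_C_mul, Polynomial.coeff_X_pow, this]
    · simp
  -- v nonzero
  have hvne : v ≠ 0 := by
    intro h
    apply hc0
    have hpm : p.map (algebraMap Fq F) = 0 := by
      apply Polynomial.eq_zero_of_natDegree_lt_card_of_eval_eq_zero _
        (f := fun i : Fin n => α ^ (i : ℕ))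
      · intro i j hij
        exact Fin.ext (hα.pow_inj i.2 j.2 hij)
      · intro i
        have h2 : Polynomial.aeval (α ^ (i : ℕ)) p = 0 := by
          simpa only [hv, Pi.zero_apply] using congrFun h i
        rw [Polynomial.eval_map, ← Polynomial.aeval_def]
        exact h2
      · calc (p.map (algebraMap Fq F)).natDegree ≤ p.natDegree :=
              Polynomial.natDegree_map_le
          _ < n := hdeg
          _ = Fintype.card (Fin n) := (Fintype.card_fin n).symm
    have hp0 : p = 0 := by
      have := Polynomial.map_injective _ hinj
      apply this
      simpa using hpm
    funext i
    rw [← hcoeff i, hp0]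
    simp
  -- factorization of the circulant
  set cF : Fin n → F := fun k => algebraMap Fq F (c k) with hcF
  set U : Matrix (Fin n) (Fin n) F := Matrix.of fun i k : Fin n => (α ^ ((i : ℕ) * (k : ℕ)))⁻¹
    with hU
  set W : Matrix (Fin n) (Fin n) F := Matrix.of fun k j : Fin n => α ^ ((k : ℕ) * (j : ℕ))
    with hW
  have hfact : circulantOf v = U * (Matrix.diagonal cF * W) := by
    ext i j
    have lhs : circulantOf v i j = ∑ k : Fin n, cF k * α ^ ((((j - i : Fin n) : ℕ)) * (k : ℕ)) := by
      simp only [circulantOf, Matrix.of_apply, hv, hp, map_sum, map_mul, Polynomial.aeval_C,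
        Polynomial.aeval_X_pow]
      refine Finset.sum_congr rfl fun k _ => ?_
      rw [← pow_mul]
    have rhs : (U * (Matrix.diagonal cF * W)) i j
        = ∑ k : Fin n, (α ^ ((i : ℕ) * (k : ℕ)))⁻¹ * (cF k * α ^ ((k : ℕ) * (j : ℕ))) := by
      simp only [Matrix.mul_apply, hU, hW, Matrix.of_apply]
      refine Finset.sum_congr rfl fun k _ => ?_
      congr 1
      rw [Finset.sum_eq_single k]
      · rw [Matrix.diagonal_apply_eq]
      · intro b _ hb
        rw [Matrix.diagonal_apply_ne _ (Ne.symm hb), zero_mul]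
      · simp
    rw [lhs, rhs]
    refine Finset.sum_congr rfl fun k _ => ?_
    have hne : α ^ ((i : ℕ) * (k : ℕ)) ≠ 0 := pow_ne_zero _ hαne
    rw [eq_inv_mul_iff_mul_eq₀ hne, mul_left_comm, ← pow_add]
    congr 1
    apply key
    have hji : (((j - i : Fin n) : ℕ) + (i : ℕ)) % n = (j : ℕ) % n := by
      have hsub : ((j - i : Fin n) : ℕ) = ((n - (i : ℕ)) + (j : ℕ)) % n :=
        congrArg Fin.val (Fin.sub_def j i)
      have hile : (i : ℕ) ≤ n := le_of_lt i.isLt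
      calc (((j - i : Fin n) : ℕ) + (i : ℕ)) % n
          = (((n - (i : ℕ)) + (j : ℕ)) % n + (i : ℕ)) % n := by rw [hsub]
        _ = (((n - (i : ℕ)) + (j : ℕ)) + (i : ℕ)) % n := by rw [Nat.mod_add_mod]
        _ = (n + (j : ℕ)) % n := by congr 1; omega
        _ = (j : ℕ) % n := Nat.add_mod_left n _
    have h1 : ((((j - i : Fin n) : ℕ) + (i : ℕ)) * (k : ℕ)) % n = ((j : ℕ) * (k : ℕ)) % n :=
      Nat.ModEq.mul_right _ hji
    calc ((i : ℕ) * (k : ℕ) + ((j - i : Fin n) : ℕ) * (k : ℕ)) % n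
        = ((((j - i : Fin n) : ℕ) + (i : ℕ)) * (k : ℕ)) % n := by rw [add_mul, Nat.add_comm]
      _ = ((j : ℕ) * (k : ℕ)) % n := h1
      _ = ((k : ℕ) * (j : ℕ)) % n := by rw [mul_comm]
  -- rank bound
  have hrank : (circulantOf v).rank ≤ d := by
    rw [hfact]
    calc (U * (Matrix.diagonal cF * W)).rank ≤ (Matrix.diagonal cF * W).rank :=
          Matrix.rank_mul_le_right _ _
      _ ≤ (Matrix.diagonal cF).rank := Matrix.rank_mul_le_left _ _
      _ = Fintype.card {k // cF k ≠ 0} := Matrix.rank_diagonal _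
      _ = d := by
          rw [← hwtc, hwt]
          rw [Fintype.card_subtype]
          congr 1
          ext k
          simp [hcF, map_eq_zero_iff _ hinj]
  exact le_trans (Nat.sInf_le ⟨v, hvne, hvan, rfl⟩) hrank
end

section
/- Let n, m, r, s be natural numbers such that n ≥ m+r, m ≥ 1, s ≥ 1 and gcd(m+r, n) ≤ m. Then for every i ∈ {1,…,n} there exist k ∈ ℕ and t with 1 ≤ t ≤ m such that i ≡ (s+k)(m+r) + t (mod n). -/
/-- The number-theoretic lemma guaranteeing the existence of the secondary pivot:
if `n ≥ m + r`, `m ≥ 1`, `s ≥ 1` and `gcd(m+r, n) ≤ m`, then every `i ∈ {1, …, n}` is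
congruent modulo `n` to `(s+k)(m+r) + t` for some `k ∈ ℕ` and some `1 ≤ t ≤ m`. -/
theorem secondary_pivot_exists (n m r s : ℕ)
    (hn : m + r ≤ n) (hm : 1 ≤ m) (hs : 1 ≤ s)
    (hgcd : Nat.gcd (m + r) n ≤ m) :
    ∀ i, 1 ≤ i → i ≤ n → ∃ k t : ℕ, 1 ≤ t ∧ t ≤ m ∧
      i % n = ((s + k) * (m + r) + t) % n := by
  intro i hi1 hin
  have hn0 : 0 < n := by omega
  set g := Nat.gcd (m + r) n with hg
  have hg0 : 0 < g := Nat.gcd_pos_of_pos_left _ (by omega)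
  set t := (i - 1) % g + 1 with ht
  have ht1 : 1 ≤ t := Nat.le_add_left 1 _
  have htm : t ≤ m := by
    have : (i - 1) % g < g := Nat.mod_lt _ hg0
    omega
  have hde0 : g * ((i - 1) / g) + ((i - 1) % g + 1) = i := by
    have := Nat.div_add_mod (i - 1) g
    omega
  set e := (i - 1) / g with he
  have hde : g * e + t = i := hde0
  set a := Nat.gcdA (m + r) n with ha
  set b := Nat.gcdB (m + r) n with hb
  have hbez : (g : ℤ) = (m + r) * a + n * b := Nat.gcd_eq_gcd_ab (m + r) n
  set c := (((e : ℤ) * a) % (n : ℤ)).toNat with hc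
  have hnz : (n : ℤ) ≠ 0 := by exact_mod_cast hn0.ne'
  have hcz : (c : ℤ) = ((e : ℤ) * a) % (n : ℤ) :=
    Int.toNat_of_nonneg (Int.emod_nonneg _ hnz)
  refine ⟨c + n * s - s, t, ht1, htm, ?_⟩
  have hsk : s + (c + n * s - s) = c + n * s := by
    have : s ≤ n * s := Nat.le_mul_of_pos_left s hn0
    omega
  rw [hsk]
  have key : ((c + n * s) * (m + r) + t : ℤ) ≡ (i : ℤ) [ZMOD (n : ℤ)] := by
    have h1 : (c : ℤ) ≡ (e : ℤ) * a [ZMOD (n : ℤ)] := by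
      rw [Int.ModEq, hcz, Int.emod_emod_of_dvd _ dvd_rfl]
    calc ((c + n * s) * (m + r) + t : ℤ)
        ≡ (c * (m + r) + t : ℤ) [ZMOD (n : ℤ)] := by
          have : ((c + n * s) * (m + r) + t : ℤ)
              = (c * (m + r) + t : ℤ) + n * (s * (m + r)) := by ring
          rw [this]; exact Int.modEq_add_fac_self
      _ ≡ ((e : ℤ) * a * (m + r) + t : ℤ) [ZMOD (n : ℤ)] :=
          Int.ModEq.add_right _ (h1.mul_right _)
      _ ≡ ((g : ℤ) * e + t : ℤ) [ZMOD (n : ℤ)] := by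
          have : ((e : ℤ) * a * (m + r) + t : ℤ)
              = ((g : ℤ) * e + t) + n * (-(e * b)) := by
            rw [hbez]; ring
          rw [this]
          exact Int.modEq_add_fac_self
      _ = (i : ℤ) := by exact_mod_cast congrArg (Nat.cast : ℕ → ℤ) hde
  exact Int.natCast_modEq_iff.mp (by exact_mod_cast key.symm)
end
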